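/- arXiv:0712.3681 — 7 statements merged into one kernel-verified Lean document; each statement's English description precedes it below -/
import Mathlib

section
/- Let Z be a real random variable and x > 0. Then x²·P[|Z| > x] + E[Z²·1_{|Z| ≤ x}] = 2·∫₀ˣ y·P[|Z| > y] dy. -/
open MeasureTheory Filter Set ProbabilityTheory

variable {Ω : Type*} [MeasurableSpace Ω]

/-- The σ-field generated by the random variables `X i`, `i ∈ s`. -/
def blockS (X : ℕ → Ω → ℝ) (s : Set ℕ) : MeasurableSpace Ω :=
  ⨆ i ∈ s, MeasurableSpace.comap (X i) (inferInstance : MeasurableSpace ℝ)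

/-- The set of ratios `P(A∩B)/(P(A)P(B))` over `A ∈ σ(X_1,…,X_k)`,
`B ∈ σ(X_{k+m}, X_{k+m+1}, …)`, `P(A)P(B) > 0`. -/
noncomputable def psiRatioSet (P : Measure Ω) (X : ℕ → Ω → ℝ) (m : ℕ) : Set ℝ :=
  {r | ∃ k ≥ 1, ∃ A B : Set Ω,
    MeasurableSet[blockS X (Set.Icc 1 k)] A ∧ MeasurableSet[blockS X (Set.Ici (k + m))] B ∧
    0 < (P A).toReal * (P B).toReal ∧
    r = (P (A ∩ B)).toReal / ((P A).toReal * (P B).toReal)}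

/-- Upper ψ-mixing coefficient `ψ*_m`. -/
noncomputable def psiStar (P : Measure Ω) (X : ℕ → Ω → ℝ) (m : ℕ) : ℝ :=
  sSup (psiRatioSet P X m)

/-- Lower ψ-mixing coefficient `ψ'_m`. -/
noncomputable def psiPrime (P : Measure Ω) (X : ℕ → Ω → ℝ) (m : ℕ) : ℝ :=
  sInf (psiRatioSet P X m)

/-- ψ-mixing coefficient `ψ_m`. -/
noncomputable def psiCoef (P : Measure Ω) (X : ℕ → Ω → ℝ) (m : ℕ) : ℝ :=
  sSup ((fun r => |r - 1|) '' psiRatioSet P X m)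

/-- φ-mixing coefficient `φ_m`. -/
noncomputable def phiCoef (P : Measure Ω) (X : ℕ → Ω → ℝ) (m : ℕ) : ℝ :=
  sSup {r | ∃ k ≥ 1, ∃ A B : Set Ω,
    MeasurableSet[blockS X (Set.Icc 1 k)] A ∧ MeasurableSet[blockS X (Set.Ici (k + m))] B ∧
    0 < (P A).toReal ∧
    r = |(P (A ∩ B)).toReal / (P A).toReal - (P B).toReal|}

/-- ρ-mixing (maximal correlation) coefficient `ρ_m`. -/
noncomputable def rhoCoef (P : Measure Ω) (X : ℕ → Ω → ℝ) (m : ℕ) : ℝ :=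
  sSup {r | ∃ k ≥ 1, ∃ f g : Ω → ℝ,
    Measurable[blockS X (Set.Icc 1 k)] f ∧ Measurable[blockS X (Set.Ici (k + m))] g ∧
    MemLp f 2 P ∧ MemLp g 2 P ∧ 0 < variance f P ∧ 0 < variance g P ∧
    r = |(∫ ω, f ω * g ω ∂P) - (∫ ω, f ω ∂P) * (∫ ω, g ω ∂P)| /
      (Real.sqrt (variance f P) * Real.sqrt (variance g P))}

/-- Strict stationarity of the sequence `X_1, X_2, …` (shift invariance of the law of
the whole sequence). -/
def Stationary (P : Measure Ω) (X : ℕ → Ω → ℝ) : Prop :=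
  Measure.map (fun ω => fun i : ℕ => X (i + 2) ω) P =
    Measure.map (fun ω => fun i : ℕ => X (i + 1) ω) P

/-- Partial sums `S_n = X_1 + ⋯ + X_n`. -/
noncomputable def pSum (X : ℕ → Ω → ℝ) (n : ℕ) (ω : Ω) : ℝ := ∑ k ∈ Finset.Icc 1 n, X k ω

/-- Convergence to `0` in probability. -/
def TendstoInP (P : Measure Ω) (Y : ℕ → Ω → ℝ) : Prop :=
  ∀ ε > 0, Tendsto (fun n => (P {ω | ε < |Y n ω|}).toReal) atTop (nhds 0)

/-- A function is slowly varying in the sense of Karamata. -/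
def SlowlyVarying (L : ℝ → ℝ) : Prop :=
  ∀ l > 0, Tendsto (fun x => L (l * x) / L x) atTop (nhds 1)

theorem stmt0 (P : Measure Ω) [IsProbabilityMeasure P] (Z : Ω → ℝ) (hZ : Measurable Z)
    (x : ℝ) (hx : 0 < x) :
    x ^ 2 * (P {ω | x < |Z ω|}).toReal + ∫ ω in {ω | |Z ω| ≤ x}, (Z ω) ^ 2 ∂P =
      2 * ∫ y in Set.Ioc 0 x, y * (P {ω | y < |Z ω|}).toReal := by
  have hZ2 : Measurable fun ω => (Z ω) ^ 2 := hZ.pow_const 2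
  set f : Ω → ℝ := fun ω => min ((Z ω) ^ 2) (x ^ 2) with hfdef
  have hfnn : ∀ ω, 0 ≤ f ω := fun ω => le_min (sq_nonneg _) (sq_nonneg _)
  have hfle : ∀ ω, f ω ≤ x ^ 2 := fun ω => min_le_right _ _
  have hfm : Measurable f := hZ2.min measurable_const
  have hfint : Integrable f P :=
    Integrable.mono' (integrable_const (x ^ 2)) hfm.aestronglyMeasurable
      (ae_of_all _ fun ω => by rw [Real.norm_eq_abs, abs_of_nonneg (hfnn ω)]; exact hfle ω)
  have hAs : MeasurableSet {ω | |Z ω| ≤ x} := measurableSet_le hZ.abs measurable_const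
  have hc : {ω | |Z ω| ≤ x}ᶜ = {ω | x < |Z ω|} := by ext ω; simp [not_le]
  -- LHS = ∫ f
  have h1 : ∫ ω in {ω | |Z ω| ≤ x}, (Z ω) ^ 2 ∂P = ∫ ω in {ω | |Z ω| ≤ x}, f ω ∂P := by
    refine setIntegral_congr_fun hAs fun ω hω => ?_
    have : (Z ω) ^ 2 ≤ x ^ 2 := by
      rw [← sq_abs]; exact pow_le_pow_left₀ (abs_nonneg _) hω 2
    simp [hfdef, min_eq_left this]
  have h2 : ∫ ω in {ω | x < |Z ω|}, f ω ∂P = x ^ 2 * (P {ω | x < |Z ω|}).toReal := by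
    rw [setIntegral_congr_fun (hc ▸ hAs.compl) (g := fun _ => x ^ 2)
      (fun ω hω => by
        have : x ^ 2 ≤ (Z ω) ^ 2 := by
          rw [← sq_abs (Z ω)]; exact pow_le_pow_left₀ hx.le (le_of_lt hω) 2
        simp [hfdef, min_eq_right this]),
      setIntegral_const, smul_eq_mul, mul_comm, measureReal_def]
  have hL : x ^ 2 * (P {ω | x < |Z ω|}).toReal + ∫ ω in {ω | |Z ω| ≤ x}, (Z ω) ^ 2 ∂P
      = ∫ ω, f ω ∂P := by
    rw [h1, ← h2, ← integral_add_compl hAs hfint, hc, add_comm]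
  rw [hL, hfint.integral_eq_integral_meas_lt (ae_of_all _ hfnn)]
  have hx2 : (0:ℝ) < x ^ 2 := by positivity
  -- restrict to Ioo 0 x²
  have step1 : ∫ t in Ioi (0:ℝ), (P {a | t < f a}).toReal
      = ∫ t in Ioo 0 (x ^ 2), (P {a | t < f a}).toReal := by
    refine setIntegral_eq_of_subset_of_ae_diff_eq_zero nullMeasurableSet_Ioi
      Ioo_subset_Ioi_self (ae_of_all _ fun t ht => ?_)
    have hxt : x ^ 2 ≤ t := by
      rcases ht with ⟨ht0, hnot⟩
      by_contra h
      exact hnot ⟨ht0, lt_of_not_ge h⟩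
    have : {a | t < f a} = ∅ := by
      ext a
      simp only [mem_setOf_eq, mem_empty_iff_false, iff_false, not_lt]
      exact (hfle a).trans hxt
    simp [this]
  have step2 : ∫ t in Ioo (0:ℝ) (x ^ 2), (P {a | t < f a}).toReal
      = ∫ t in Ioo (0:ℝ) (x ^ 2), (P {a | t < (Z a) ^ 2}).toReal := by
    refine setIntegral_congr_fun measurableSet_Ioo fun t ht => ?_
    have : {a | t < f a} = {a | t < (Z a) ^ 2} := by
      ext a
      simp only [mem_setOf_eq, hfdef, lt_min_iff]
      exact and_iff_left ht.2
    rw [this]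
  have himg : (fun y : ℝ => y ^ 2) '' Ioo 0 x = Ioo 0 (x ^ 2) := by
    ext t
    constructor
    · rintro ⟨y, ⟨hy0, hyx⟩, rfl⟩
      exact ⟨by positivity, pow_lt_pow_left₀ hyx hy0.le two_ne_zero⟩
    · rintro ⟨ht0, htx⟩
      exact ⟨Real.sqrt t, ⟨Real.sqrt_pos.mpr ht0, (Real.sqrt_lt' hx).mpr htx⟩,
        Real.sq_sqrt ht0.le⟩
  have hinj : InjOn (fun y : ℝ => y ^ 2) (Ioo 0 x) := by
    intro a ha b hb h
    simp only at h
    nlinarith [ha.1, hb.1]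
  have hcv := integral_image_eq_integral_abs_deriv_smul (f' := fun y => 2 * y)
    measurableSet_Ioo
    (fun y _ => by simpa using (hasDerivAt_pow 2 y).hasDerivWithinAt)
    hinj (fun t => (P {a | t < (Z a) ^ 2}).toReal)
  rw [himg] at hcv
  have step4 : ∫ y in Ioo (0:ℝ) x, |2 * y| • (P {a | y ^ 2 < (Z a) ^ 2}).toReal
      = ∫ y in Ioo (0:ℝ) x, 2 * (y * (P {a | y < |Z a|}).toReal) := by
    refine setIntegral_congr_fun measurableSet_Ioo fun y hy => ?_
    have hab : |2 * y| = 2 * y := abs_of_pos (by linarith [hy.1])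
    have hset : {a | y ^ 2 < (Z a) ^ 2} = {a | y < |Z a|} := by
      ext a
      simp only [mem_setOf_eq]
      rw [← sq_abs (Z a)]
      exact pow_lt_pow_iff_left₀ hy.1.le (abs_nonneg _) two_ne_zero
    rw [smul_eq_mul, hab, hset]
    ring
  simp only [measureReal_def]
  rw [step1, step2, hcv, step4, integral_const_mul, ← integral_Ioc_eq_integral_Ioo]
end

section
/- Let Z be a real random variable, c_n → ∞ a sequence of positive reals. Then the two conditions (i) n·P[|Z| > c_n] → 0 and n·c_n⁻²·E[Z²·1_{|Z| ≤ c_n}] → 0 hold simultaneously if and only if ∫₀¹ n·P[|Z| > √x · c_n] dx → 0 as n → ∞. -/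
open MeasureTheory Filter Set ProbabilityTheory

variable {Ω : Type*} [MeasurableSpace Ω]

lemma tendsto_add_zero_iff' {f g : ℕ → ℝ} (hf : ∀ n, 0 ≤ f n) (hg : ∀ n, 0 ≤ g n) :
    (Tendsto f atTop (nhds 0) ∧ Tendsto g atTop (nhds 0)) ↔
      Tendsto (fun n => f n + g n) atTop (nhds 0) := by
  constructor
  · rintro ⟨h1, h2⟩; simpa using h1.add h2
  · intro h
    exact ⟨squeeze_zero hf (fun n => le_add_of_nonneg_right (hg n)) h,
      squeeze_zero hg (fun n => le_add_of_nonneg_left (hf n)) h⟩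

lemma key_layercake (P : Measure Ω) [IsProbabilityMeasure P] (Z : Ω → ℝ) (hZ : Measurable Z)
    (c : ℝ) (hc : 0 < c) :
    ∫ x in Set.Ioc (0:ℝ) 1, (P {ω | Real.sqrt x * c < |Z ω|}).toReal
      = (1 / c ^ 2) * (∫ ω in {ω | |Z ω| ≤ c}, (Z ω) ^ 2 ∂P) + (P {ω | c < |Z ω|}).toReal := by
  set W : Ω → ℝ := fun ω => min ((Z ω) ^ 2 / c ^ 2) 1 with hWdef
  have hWmeas : Measurable W := ((hZ.pow_const 2).div_const _).min measurable_const
  have hW0 : ∀ ω, 0 ≤ W ω := fun ω => le_min (by positivity) zero_le_one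
  have hW1 : ∀ ω, W ω ≤ 1 := fun ω => min_le_right _ _
  have hWint : Integrable W P := by
    refine (integrable_const (1:ℝ)).mono' hWmeas.aestronglyMeasurable ?_
    filter_upwards with ω
    rw [Real.norm_eq_abs, abs_of_nonneg (hW0 ω)]; exact hW1 ω
  have layer : ∫ ω, W ω ∂P = ∫ t in Set.Ioi (0:ℝ), (P {ω | t < W ω}).toReal :=
    hWint.integral_eq_integral_meas_lt (ae_of_all _ hW0)
  have step2 : ∫ t in Set.Ioi (0:ℝ), (P {ω | t < W ω}).toReal
      = ∫ t in Set.Ioc (0:ℝ) 1, (P {ω | t < W ω}).toReal := by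
    calc ∫ t in Set.Ioi (0:ℝ), (P {ω | t < W ω}).toReal
        = ∫ t in Set.Ioi (0:ℝ), (Set.Ioc (0:ℝ) 1).indicator
            (fun t => (P {ω | t < W ω}).toReal) t := by
          refine setIntegral_congr_fun measurableSet_Ioi (fun t ht => ?_)
          by_cases h1 : t ≤ 1
          · rw [Set.indicator_of_mem (Set.mem_Ioc.mpr ⟨ht, h1⟩)]
          · rw [Set.indicator_of_notMem (fun h => h1 h.2)]
            have : {ω | t < W ω} = (∅ : Set Ω) := by
              ext ω; simp only [Set.mem_setOf_eq, Set.mem_empty_iff_false, iff_false, not_lt]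
              exact (hW1 ω).trans (le_of_not_ge h1)
            simp [this]
      _ = ∫ t in Set.Ioi (0:ℝ) ∩ Set.Ioc 0 1, (P {ω | t < W ω}).toReal :=
          setIntegral_indicator measurableSet_Ioc
      _ = ∫ t in Set.Ioc (0:ℝ) 1, (P {ω | t < W ω}).toReal := by
          rw [Set.inter_eq_right.mpr Set.Ioc_subset_Ioi_self]
  have step3 : ∫ t in Set.Ioc (0:ℝ) 1, (P {ω | t < W ω}).toReal
      = ∫ x in Set.Ioc (0:ℝ) 1, (P {ω | Real.sqrt x * c < |Z ω|}).toReal := by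
    refine setIntegral_congr_ae measurableSet_Ioc ?_
    have h1 : ∀ᵐ x : ℝ, x ≠ (1:ℝ) := by
      rw [ae_iff]
      simp only [ne_eq, not_not, Set.setOf_eq_eq_singleton]
      exact measure_singleton 1
    filter_upwards [h1] with x hx1 hx
    have hx0 : (0:ℝ) < x := hx.1
    have hxlt : x < 1 := lt_of_le_of_ne hx.2 hx1
    have hset : {ω | x < W ω} = {ω | Real.sqrt x * c < |Z ω|} := by
      ext ω
      simp only [Set.mem_setOf_eq, hWdef, lt_min_iff]
      constructor
      · rintro ⟨h, -⟩
        have h2 : x * c ^ 2 < (Z ω) ^ 2 := (lt_div_iff₀ (by positivity)).mp h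
        calc Real.sqrt x * c = Real.sqrt (x * c ^ 2) := by
              rw [Real.sqrt_mul hx0.le, Real.sqrt_sq hc.le]
          _ < Real.sqrt ((Z ω) ^ 2) := Real.sqrt_lt_sqrt (by positivity) h2
          _ = |Z ω| := Real.sqrt_sq_eq_abs _
      · intro h
        have h3 : (Real.sqrt x * c) ^ 2 < (Z ω) ^ 2 := by
          rw [← sq_abs (Z ω)]
          refine sq_lt_sq' ?_ h
          have := mul_nonneg (Real.sqrt_nonneg x) hc.le
          linarith
        have h2 : x * c ^ 2 < (Z ω) ^ 2 := by
          rwa [mul_pow, Real.sq_sqrt hx0.le] at h3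
        exact ⟨(lt_div_iff₀ (by positivity)).mpr h2, hxlt⟩
    rw [hset]
  have hA : MeasurableSet {ω | |Z ω| ≤ c} := measurableSet_le hZ.abs measurable_const
  have step4 : ∫ ω, W ω ∂P
      = (1 / c ^ 2) * (∫ ω in {ω | |Z ω| ≤ c}, (Z ω) ^ 2 ∂P) + (P {ω | c < |Z ω|}).toReal := by
    rw [← integral_add_compl hA hWint]
    congr 1
    · rw [show (1 / c ^ 2) * ∫ ω in {ω | |Z ω| ≤ c}, (Z ω) ^ 2 ∂P
          = ∫ ω in {ω | |Z ω| ≤ c}, (1 / c ^ 2) * (Z ω) ^ 2 ∂P from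
          (integral_const_mul _ _).symm]
      refine setIntegral_congr_fun hA (fun ω hω => ?_)
      have hle : (Z ω) ^ 2 ≤ c ^ 2 := by
        have : |Z ω| ≤ c := hω
        nlinarith [abs_nonneg (Z ω), sq_abs (Z ω)]
      simp only [hWdef]
      rw [min_eq_left ((div_le_one (by positivity)).mpr hle)]
      ring
    · have hcompl : {ω | |Z ω| ≤ c}ᶜ = {ω | c < |Z ω|} := by
        ext ω; simp [not_le]
      rw [hcompl]
      calc ∫ ω in {ω | c < |Z ω|}, W ω ∂P = ∫ ω in {ω | c < |Z ω|}, (1:ℝ) ∂P := by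
            refine setIntegral_congr_fun (by rw [← hcompl]; exact hA.compl) (fun ω hω => ?_)
            have hge : c ^ 2 ≤ (Z ω) ^ 2 := by
              have : c < |Z ω| := hω
              nlinarith [abs_nonneg (Z ω), sq_abs (Z ω)]
            simp only [hWdef]
            exact min_eq_right ((one_le_div (by positivity)).mpr hge)
        _ = (P {ω | c < |Z ω|}).toReal := by simp; rfl
  rw [← step3, ← step2, ← layer, step4]

theorem stmt1 (P : Measure Ω) [IsProbabilityMeasure P] (Z : Ω → ℝ) (hZ : Measurable Z)
    (c : ℕ → ℝ) (hc : ∀ n, 0 < c n) (hc' : Tendsto c atTop atTop) :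
    (Tendsto (fun n : ℕ => (n : ℝ) * (P {ω | c n < |Z ω|}).toReal) atTop (nhds 0) ∧
      Tendsto (fun n : ℕ =>
        (n : ℝ) / (c n) ^ 2 * ∫ ω in {ω | |Z ω| ≤ c n}, (Z ω) ^ 2 ∂P) atTop (nhds 0)) ↔
    Tendsto (fun n : ℕ =>
      ∫ x in Set.Ioc (0:ℝ) 1, (n : ℝ) * (P {ω | Real.sqrt x * c n < |Z ω|}).toReal)
      atTop (nhds 0) := by
  have keyn : ∀ n : ℕ,
      ∫ x in Set.Ioc (0:ℝ) 1, (n : ℝ) * (P {ω | Real.sqrt x * c n < |Z ω|}).toReal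
        = (n : ℝ) * (P {ω | c n < |Z ω|}).toReal
          + (n : ℝ) / (c n) ^ 2 * ∫ ω in {ω | |Z ω| ≤ c n}, (Z ω) ^ 2 ∂P := by
    intro n
    rw [integral_const_mul, key_layercake P Z hZ (c n) (hc n)]
    ring
  rw [tendsto_congr keyn]
  have hA : ∀ n : ℕ, MeasurableSet {ω | |Z ω| ≤ c n} :=
    fun n => measurableSet_le hZ.abs measurable_const
  exact tendsto_add_zero_iff'
    (fun n => mul_nonneg (Nat.cast_nonneg n) ENNReal.toReal_nonneg)
    (fun n => mul_nonneg (div_nonneg (Nat.cast_nonneg n) (sq_nonneg _))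
      (setIntegral_nonneg (hA n) (fun ω _ => sq_nonneg _)))
end

section
/- Let X_1, X_2, … be a sequence of real random variables with partial sums S_n = X_1 + ⋯ + X_n, such that S_n − S_k has a symmetric distribution for all n > k ≥ 1, and let ψ'_1 := inf over k, over events A ∈ σ(X_1,…,X_k) and B ∈ σ(X_{k+1}, X_{k+2}, …) with P(A)P(B) > 0, of P(A∩B)/(P(A)P(B)). Then for all n ≥ 1 and x > 0: 2·P[|S_n| > x] ≥ ψ'_1 · P[max_{1≤k≤n} |S_k| > x]. -/
open MeasureTheory Filter Set ProbabilityTheory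

variable {Ω : Type*} [MeasurableSpace Ω]

lemma measurable_blockS (X : ℕ → Ω → ℝ) {s : Set ℕ} {i : ℕ} (hi : i ∈ s) :
    Measurable[blockS X s] (X i) :=
  measurable_iff_comap_le.mpr
    (le_iSup₂ (f := fun i (_ : i ∈ s) =>
      MeasurableSpace.comap (X i) (inferInstance : MeasurableSpace ℝ)) i hi)

lemma blockS_le (X : ℕ → Ω → ℝ) (hX : ∀ i, Measurable (X i)) (s : Set ℕ) :
    blockS X s ≤ ‹MeasurableSpace Ω› :=
  iSup₂_le fun i _ => (hX i).comap_le

lemma pSum_measurable_blockS (X : ℕ → Ω → ℝ) {k j : ℕ} (hj : j ≤ k) :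
    Measurable[blockS X (Set.Icc 1 k)] (pSum X j) :=
  Finset.measurable_sum _ fun i hi =>
    measurable_blockS X ⟨(Finset.mem_Icc.mp hi).1, le_trans (Finset.mem_Icc.mp hi).2 hj⟩

theorem stmt2 (P : Measure Ω) [IsProbabilityMeasure P] (X : ℕ → Ω → ℝ)
    (hX : ∀ i, Measurable (X i))
    (hsym : ∀ k n : ℕ, 1 ≤ k → k < n →
      Measure.map (fun ω => pSum X n ω - pSum X k ω) P =
        Measure.map (fun ω => -(pSum X n ω - pSum X k ω)) P)
    (n : ℕ) (hn : 1 ≤ n) (x : ℝ) (hx : 0 < x) :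
    psiPrime P X 1 * (P {ω | x < ⨆ k ∈ Finset.Icc 1 n, |pSum X k ω|}).toReal ≤
      2 * (P {ω | x < |pSum X n ω|}).toReal := by
  classical
  have hconst : ∀ (m : MeasurableSpace Ω) (c : ℝ), Measurable[m] fun _ : Ω => c :=
    fun m c => @measurable_const ℝ Ω _ m c
  -- basic facts about psiPrime
  have hratio_nonneg : ∀ r ∈ psiRatioSet P X 1, 0 ≤ r := by
    rintro r ⟨k, hk, A, B, hA, hB, hpos, rfl⟩
    exact div_nonneg ENNReal.toReal_nonneg hpos.le
  have hbdd : BddBelow (psiRatioSet P X 1) := ⟨0, hratio_nonneg⟩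
  have h1mem : (1 : ℝ) ∈ psiRatioSet P X 1 :=
    ⟨1, le_rfl, Set.univ, Set.univ, MeasurableSet.univ, MeasurableSet.univ, by simp, by simp⟩
  have hψ0 : 0 ≤ psiPrime P X 1 := le_csInf ⟨1, h1mem⟩ hratio_nonneg
  have hψ1 : psiPrime P X 1 ≤ 1 := csInf_le hbdd h1mem
  -- key mixing estimate
  have key : ∀ k, 1 ≤ k → ∀ A B : Set Ω,
      MeasurableSet[blockS X (Set.Icc 1 k)] A → MeasurableSet[blockS X (Set.Ici (k + 1))] B →
      1 / 2 ≤ (P B).toReal →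
      psiPrime P X 1 * (P A).toReal ≤ 2 * (P (A ∩ B)).toReal := by
    intro k hk A B hA hB hBhalf
    rcases eq_or_lt_of_le (ENNReal.toReal_nonneg : (0:ℝ) ≤ (P A).toReal) with h0 | hpos
    · rw [← h0, mul_zero]
      positivity
    · have habpos : 0 < (P A).toReal * (P B).toReal :=
        mul_pos hpos (lt_of_lt_of_le (by norm_num) hBhalf)
      have hmem : (P (A ∩ B)).toReal / ((P A).toReal * (P B).toReal) ∈ psiRatioSet P X 1 :=
        ⟨k, hk, A, B, hA, hB, habpos, rfl⟩
      have h1 := csInf_le hbdd hmem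
      have h2 : psiPrime P X 1 * ((P A).toReal * (P B).toReal) ≤ (P (A ∩ B)).toReal :=
        (le_div_iff₀ habpos).mp h1
      nlinarith [mul_nonneg hψ0 hpos.le, ENNReal.toReal_nonneg (a := P (A ∩ B))]
  -- setup
  set S : ℕ → Ω → ℝ := pSum X with hS
  have hSmeas : ∀ j, Measurable (S j) := fun j => Finset.measurable_sum _ fun i _ => hX i
  set Ap : ℕ → Set Ω :=
    fun k => {ω | (∀ j ∈ Finset.Icc 1 (k - 1), |S j ω| ≤ x) ∧ x < S k ω} with hAp
  set Am : ℕ → Set Ω :=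
    fun k => {ω | (∀ j ∈ Finset.Icc 1 (k - 1), |S j ω| ≤ x) ∧ S k ω < -x} with hAm
  set A : ℕ → Set Ω := fun k => Ap k ∪ Am k with hA
  set Bp : ℕ → Set Ω := fun k => {ω | 0 ≤ S n ω - S k ω} with hBp
  set Bm : ℕ → Set Ω := fun k => {ω | S n ω - S k ω ≤ 0} with hBm
  set C : ℕ → Set Ω := fun k => (Ap k ∩ Bp k) ∪ (Am k ∩ Bm k) with hC
  have hAmem : ∀ k ω, ω ∈ A k ↔
      ((∀ j ∈ Finset.Icc 1 (k - 1), |S j ω| ≤ x) ∧ x < |S k ω|) := by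
    intro k ω
    simp only [hA, hAp, hAm, Set.mem_union, Set.mem_setOf_eq]
    constructor
    · rintro (⟨h1, h2⟩ | ⟨h1, h2⟩)
      · exact ⟨h1, lt_of_lt_of_le h2 (le_abs_self _)⟩
      · exact ⟨h1, lt_of_lt_of_le (lt_neg.mpr h2) (neg_le_abs _)⟩
    · rintro ⟨h1, h2⟩
      rcases lt_abs.mp h2 with h | h
      · exact Or.inl ⟨h1, h⟩
      · exact Or.inr ⟨h1, lt_neg.mp h⟩
  -- blockS-measurability
  have hSb : ∀ k j, j ≤ k → Measurable[blockS X (Set.Icc 1 k)] (S j) :=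
    fun k j hj => pSum_measurable_blockS X hj
  have hpast : ∀ k, MeasurableSet[blockS X (Set.Icc 1 k)]
      {ω | ∀ j ∈ Finset.Icc 1 (k - 1), |S j ω| ≤ x} := by
    intro k
    have he : {ω | ∀ j ∈ Finset.Icc 1 (k - 1), |S j ω| ≤ x} =
        ⋂ j, ⋂ _ : j ∈ Finset.Icc 1 (k - 1), {ω | |S j ω| ≤ x} := by
      ext ω; simp
    rw [he]
    refine MeasurableSet.iInter fun j => MeasurableSet.iInter fun hj => ?_
    have hj' : j ≤ k := le_trans (Finset.mem_Icc.mp hj).2 (Nat.sub_le k 1)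
    exact measurableSet_le (measurable_abs.comp (hSb k j hj')) (hconst _ x)
  have hApm : ∀ k, MeasurableSet[blockS X (Set.Icc 1 k)] (Ap k) := fun k =>
    (hpast k).inter (measurableSet_lt (hconst _ x) (hSb k k le_rfl))
  have hAmm : ∀ k, MeasurableSet[blockS X (Set.Icc 1 k)] (Am k) := fun k =>
    (hpast k).inter (measurableSet_lt (hSb k k le_rfl) (hconst _ (-x)))
  have hIccIoc : ∀ m : ℕ, Finset.Icc 1 m = Finset.Ioc 0 m := fun m => Finset.Icc_add_one_left_eq_Ioc 0 m
  have hdiff : ∀ k, k ≤ n → (fun ω => S n ω - S k ω) = fun ω => ∑ i ∈ Finset.Ioc k n, X i ω := by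
    intro k hk
    funext ω
    have h1 : S n ω = ∑ i ∈ Finset.Ioc 0 n, X i ω := by
      rw [hS]; unfold pSum; rw [hIccIoc]
    have h2 : S k ω = ∑ i ∈ Finset.Ioc 0 k, X i ω := by
      rw [hS]; unfold pSum; rw [hIccIoc]
    rw [h1, h2, ← Finset.sum_Ioc_consecutive (fun i => X i ω) (Nat.zero_le k) hk]
    ring
  have hBblock : ∀ k, k ≤ n →
      Measurable[blockS X (Set.Ici (k + 1))] (fun ω => S n ω - S k ω) := by
    intro k hk
    rw [hdiff k hk]
    exact Finset.measurable_sum _ fun i hi => measurable_blockS X (Finset.mem_Ioc.mp hi).1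
  have hBpm : ∀ k, k ≤ n → MeasurableSet[blockS X (Set.Ici (k + 1))] (Bp k) := fun k hk =>
    measurableSet_le (hconst _ 0) (hBblock k hk)
  have hBmm : ∀ k, k ≤ n → MeasurableSet[blockS X (Set.Ici (k + 1))] (Bm k) := fun k hk =>
    measurableSet_le (hBblock k hk) (hconst _ 0)
  -- ambient measurability
  have hble := blockS_le X hX
  have hApam : ∀ k, MeasurableSet (Ap k) := fun k => hble _ _ (hApm k)
  have hAmam : ∀ k, MeasurableSet (Am k) := fun k => hble _ _ (hAmm k)
  have hAam : ∀ k, MeasurableSet (A k) := fun k => (hApam k).union (hAmam k)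
  have hBpam : ∀ k, MeasurableSet (Bp k) := fun k =>
    measurableSet_le measurable_const ((hSmeas n).sub (hSmeas k))
  have hBmam : ∀ k, MeasurableSet (Bm k) := fun k =>
    measurableSet_le ((hSmeas n).sub (hSmeas k)) measurable_const
  have hCam : ∀ k, MeasurableSet (C k) := fun k =>
    ((hApam k).inter (hBpam k)).union ((hAmam k).inter (hBmam k))
  -- symmetry: P(Bp k), P(Bm k) ≥ 1/2
  have hhalf : ∀ k, 1 ≤ k → k ≤ n → 1 / 2 ≤ (P (Bp k)).toReal ∧ 1 / 2 ≤ (P (Bm k)).toReal := by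
    intro k hk hkn
    have hY : Measurable fun ω => S n ω - S k ω := (hSmeas n).sub (hSmeas k)
    have hsym' : Measure.map (fun ω => S n ω - S k ω) P =
        Measure.map (fun ω => -(S n ω - S k ω)) P := by
      rcases lt_or_eq_of_le hkn with h | h
      · exact hsym k n hk h
      · subst h; congr 1; funext ω; ring
    have hmapp : P (Bp k) = Measure.map (fun ω => S n ω - S k ω) P (Set.Ici 0) := by
      rw [Measure.map_apply hY measurableSet_Ici]; rfl
    have hmapm : P (Bm k) = Measure.map (fun ω => -(S n ω - S k ω)) P (Set.Ici 0) := by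
      rw [Measure.map_apply (f := fun ω => -(S n ω - S k ω)) hY.neg measurableSet_Ici]
      congr 1
      ext ω
      simp [hBm, neg_nonneg]
    have heq : P (Bp k) = P (Bm k) := by rw [hmapp, hmapm, hsym']
    have hcover : (Set.univ : Set Ω) ⊆ Bp k ∪ Bm k := fun ω _ => by
      rcases le_total 0 (S n ω - S k ω) with h | h
      · exact Or.inl h
      · exact Or.inr h
    have h1 : (1 : ENNReal) ≤ P (Bp k) + P (Bm k) := by
      calc (1 : ENNReal) = P Set.univ := measure_univ.symm
        _ ≤ P (Bp k ∪ Bm k) := measure_mono hcover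
        _ ≤ P (Bp k) + P (Bm k) := measure_union_le _ _
    have h2 : (1 : ℝ) ≤ (P (Bp k)).toReal + (P (Bm k)).toReal := by
      have h3 := ENNReal.toReal_mono
        (ENNReal.add_ne_top.mpr ⟨measure_ne_top P _, measure_ne_top P _⟩) h1
      rwa [ENNReal.toReal_one, ENNReal.toReal_add (measure_ne_top P _) (measure_ne_top P _)] at h3
    have heq' : (P (Bp k)).toReal = (P (Bm k)).toReal := by rw [heq]
    constructor <;> linarith
  -- per-k estimate
  have hperk : ∀ k ∈ Finset.Icc 1 n,
      psiPrime P X 1 * (P (A k)).toReal ≤ 2 * (P (C k)).toReal := by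
    intro k hk
    obtain ⟨hk1, hkn⟩ := Finset.mem_Icc.mp hk
    obtain ⟨hbp, hbm⟩ := hhalf k hk1 hkn
    have h1 := key k hk1 (Ap k) (Bp k) (hApm k) (hBpm k hkn) hbp
    have h2 := key k hk1 (Am k) (Bm k) (hAmm k) (hBmm k hkn) hbm
    have hdAB : Disjoint (Ap k) (Am k) := Set.disjoint_left.mpr (by
      rintro ω ⟨_, hp⟩ ⟨_, hm⟩
      simp only [hAp, hAm, Set.mem_setOf_eq] at *
      linarith)
    have hPA : (P (A k)).toReal = (P (Ap k)).toReal + (P (Am k)).toReal := by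
      show (P (Ap k ∪ Am k)).toReal = _
      rw [measure_union hdAB (hAmam k),
        ENNReal.toReal_add (measure_ne_top P _) (measure_ne_top P _)]
    have hdC : Disjoint (Ap k ∩ Bp k) (Am k ∩ Bm k) :=
      hdAB.mono Set.inter_subset_left Set.inter_subset_left
    have hPC : (P (C k)).toReal = (P (Ap k ∩ Bp k)).toReal + (P (Am k ∩ Bm k)).toReal := by
      show (P (Ap k ∩ Bp k ∪ Am k ∩ Bm k)).toReal = _
      rw [measure_union hdC ((hAmam k).inter (hBmam k)),
        ENNReal.toReal_add (measure_ne_top P _) (measure_ne_top P _)]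
    rw [hPA, hPC, mul_add]
    linarith
  -- the union identities
  have hAdisjaux : ∀ i j, 1 ≤ i → i < j → Disjoint (A i) (A j) := by
    intro i j hi1 hij
    refine Set.disjoint_left.mpr fun ω hωi hωj => ?_
    have h1 : x < |S i ω| := ((hAmem i ω).mp hωi).2
    have h2 : |S i ω| ≤ x :=
      ((hAmem j ω).mp hωj).1 i (Finset.mem_Icc.mpr ⟨hi1, by omega⟩)
    linarith
  have hAdisj : (↑(Finset.Icc 1 n) : Set ℕ).PairwiseDisjoint A := by
    intro i hi j hj hij
    rw [Finset.mem_coe, Finset.mem_Icc] at hi hj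
    rcases lt_or_gt_of_ne hij with h | h
    · exact hAdisjaux i j hi.1 h
    · exact (hAdisjaux j i hj.1 h).symm
  have hCsubA : ∀ k, C k ⊆ A k := fun k =>
    Set.union_subset_union Set.inter_subset_left Set.inter_subset_left
  have hCdisj : (↑(Finset.Icc 1 n) : Set ℕ).PairwiseDisjoint C := fun i hi j hj hij =>
    ((hAdisj hi hj hij).mono (hCsubA i) (hCsubA j))
  have hCsub : ∀ k ∈ Finset.Icc 1 n, C k ⊆ {ω | x < |S n ω|} := by
    intro k _ ω hω
    rcases hω with ⟨⟨_, h2⟩, h3⟩ | ⟨⟨_, h2⟩, h3⟩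
    · simp only [hAp, hBp, Set.mem_setOf_eq] at h2 h3
      have : x < S n ω := by linarith
      exact lt_of_lt_of_le this (le_abs_self _)
    · simp only [hAm, hBm, Set.mem_setOf_eq] at h2 h3
      have : x < -(S n ω) := by linarith
      exact lt_of_lt_of_le this (neg_le_abs _)
  have hset : {ω | x < ⨆ k ∈ Finset.Icc 1 n, |S k ω|} = ⋃ k ∈ Finset.Icc 1 n, A k := by
    ext ω
    simp only [Set.mem_setOf_eq, Set.mem_iUnion, exists_prop]
    constructor
    · intro hsup
      have hex : ∃ k, k ∈ Finset.Icc 1 n ∧ x < |S k ω| := by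
        by_contra hcon
        push_neg at hcon
        have hle : (⨆ k ∈ Finset.Icc 1 n, |S k ω|) ≤ x := by
          refine ciSup_le fun k => ?_
          show (⨆ _ : k ∈ Finset.Icc 1 n, |S k ω|) ≤ x
          by_cases hk : k ∈ Finset.Icc 1 n
          · haveI : Nonempty (k ∈ Finset.Icc 1 n) := ⟨hk⟩
            exact ciSup_le fun hk' => hcon k hk'
          · haveI : IsEmpty (k ∈ Finset.Icc 1 n) := ⟨fun h => hk h⟩
            rw [Real.iSup_of_isEmpty]
            exact hx.le
        linarith
      have k0spec := Nat.find_spec hex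
      set k0 := Nat.find hex with hk0
      refine ⟨k0, k0spec.1, ?_⟩
      rw [hAmem]
      refine ⟨fun j hj => ?_, k0spec.2⟩
      by_contra hcon2
      push_neg at hcon2
      have hj' := Finset.mem_Icc.mp hj
      have hk0n := Finset.mem_Icc.mp k0spec.1
      have hjlt : j < k0 := by omega
      exact Nat.find_min hex hjlt ⟨Finset.mem_Icc.mpr ⟨hj'.1, by omega⟩, hcon2⟩
    · rintro ⟨k, hk, hωA⟩
      have h2 := ((hAmem k ω).mp hωA).2
      have hbdd2 : BddAbove (Set.range fun j => ⨆ _ : j ∈ Finset.Icc 1 n, |S j ω|) := by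
        refine ⟨∑ i ∈ Finset.Icc 1 n, |S i ω|, ?_⟩
        rintro _ ⟨j, rfl⟩
        show (⨆ _ : j ∈ Finset.Icc 1 n, |S j ω|) ≤ ∑ i ∈ Finset.Icc 1 n, |S i ω|
        by_cases hj : j ∈ Finset.Icc 1 n
        · rw [ciSup_pos hj]
          exact Finset.single_le_sum (f := fun i => |S i ω|) (fun i _ => abs_nonneg _) hj
        · haveI : IsEmpty (j ∈ Finset.Icc 1 n) := ⟨fun h => hj h⟩
          rw [Real.iSup_of_isEmpty]
          exact Finset.sum_nonneg fun i _ => abs_nonneg _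
      have hle : |S k ω| ≤ ⨆ j ∈ Finset.Icc 1 n, |S j ω| := by
        have := le_ciSup hbdd2 k
        rwa [ciSup_pos hk] at this
      linarith
  -- assemble
  have hmeq : (P {ω | x < ⨆ k ∈ Finset.Icc 1 n, |S k ω|}).toReal =
      ∑ k ∈ Finset.Icc 1 n, (P (A k)).toReal := by
    rw [hset, measure_biUnion_finset hAdisj fun k _ => hAam k,
      ENNReal.toReal_sum fun _ _ => measure_ne_top P _]
  have hmeqC : ∑ k ∈ Finset.Icc 1 n, (P (C k)).toReal =
      (P (⋃ k ∈ Finset.Icc 1 n, C k)).toReal := by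
    rw [measure_biUnion_finset hCdisj fun k _ => hCam k,
      ENNReal.toReal_sum fun _ _ => measure_ne_top P _]
  calc psiPrime P X 1 * (P {ω | x < ⨆ k ∈ Finset.Icc 1 n, |S k ω|}).toReal
      = ∑ k ∈ Finset.Icc 1 n, psiPrime P X 1 * (P (A k)).toReal := by
        rw [hmeq, Finset.mul_sum]
    _ ≤ ∑ k ∈ Finset.Icc 1 n, 2 * (P (C k)).toReal := Finset.sum_le_sum hperk
    _ = 2 * (P (⋃ k ∈ Finset.Icc 1 n, C k)).toReal := by rw [← Finset.mul_sum, hmeqC]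
    _ ≤ 2 * (P {ω | x < |S n ω|}).toReal := by
        have := ENNReal.toReal_mono (measure_ne_top P _)
          (measure_mono (Set.iUnion₂_subset hCsub))
        linarith
end

section
/- Let {X_k} be a strictly stationary sequence with φ-mixing coefficient φ_m < 1 at lag m, and let {X*_k} be an i.i.d. sequence with X*_1 distributed as X_1. Let M_n = max_{1≤k≤n}|X_k| and M*_n = max_{1≤k≤n}|X*_k|. Then for every x ≥ 0 and all n ≥ m ≥ 1: (1−φ_m)·P[M*_{⌊n/m⌋} > x] ≤ P[M_n > x] ≤ m·(1+φ_m)·P[M*_{⌊n/m⌋+1} > x]. -/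
open MeasureTheory Filter Set ProbabilityTheory

variable {Ω : Type*} [MeasurableSpace Ω]

namespace Stmt5Aux

lemma mem_blockS {X : ℕ → Ω → ℝ} {s : Set ℕ} {k : ℕ} (hk : k ∈ s)
    {t : Set ℝ} (ht : MeasurableSet t) : MeasurableSet[blockS X s] (X k ⁻¹' t) := by
  have h1 : MeasurableSet[MeasurableSpace.comap (X k) inferInstance] (X k ⁻¹' t) :=
    ⟨t, ht, rfl⟩
  have h2 : MeasurableSpace.comap (X k) inferInstance ≤ blockS X s :=
    le_iSup₂ (f := fun i (_ : i ∈ s) =>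
      MeasurableSpace.comap (X i) (inferInstance : MeasurableSpace ℝ)) k hk
  exact h2 _ h1

lemma toReal_prob_le_one (P : Measure Ω) [IsProbabilityMeasure P] (s : Set Ω) :
    (P s).toReal ≤ 1 := by
  have h := prob_le_one (μ := P) (s := s)
  simpa using ENNReal.toReal_mono ENNReal.one_ne_top h

lemma phi_bddAbove (P : Measure Ω) [IsProbabilityMeasure P] (X : ℕ → Ω → ℝ) (m : ℕ) :
    ∀ r ∈ {r : ℝ | ∃ k ≥ 1, ∃ A B : Set Ω,
      MeasurableSet[blockS X (Set.Icc 1 k)] A ∧ MeasurableSet[blockS X (Set.Ici (k + m))] B ∧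
      0 < (P A).toReal ∧
      r = |(P (A ∩ B)).toReal / (P A).toReal - (P B).toReal|}, r ≤ 1 := by
  rintro r ⟨k, hk, A, B, hA, hB, hApos, rfl⟩
  have hab : (P (A ∩ B)).toReal ≤ (P A).toReal :=
    ENNReal.toReal_mono (measure_ne_top P A) (measure_mono Set.inter_subset_left)
  have h1 : (P (A ∩ B)).toReal / (P A).toReal ≤ 1 := (div_le_one hApos).2 hab
  have h2 : 0 ≤ (P (A ∩ B)).toReal / (P A).toReal :=
    div_nonneg ENNReal.toReal_nonneg ENNReal.toReal_nonneg
  have h3 : (P B).toReal ≤ 1 := toReal_prob_le_one P B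
  have h4 : 0 ≤ (P B).toReal := ENNReal.toReal_nonneg
  exact abs_le.2 ⟨by linarith, by linarith⟩

lemma phi_nonneg (P : Measure Ω) [IsProbabilityMeasure P] (X : ℕ → Ω → ℝ) (m : ℕ) :
    0 ≤ phiCoef P X m := by
  have hmem : (0 : ℝ) ∈ {r : ℝ | ∃ k ≥ 1, ∃ A B : Set Ω,
      MeasurableSet[blockS X (Set.Icc 1 k)] A ∧ MeasurableSet[blockS X (Set.Ici (k + m))] B ∧
      0 < (P A).toReal ∧
      r = |(P (A ∩ B)).toReal / (P A).toReal - (P B).toReal|} :=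
    ⟨1, le_refl 1, Set.univ, ∅, @MeasurableSet.univ Ω (blockS X (Set.Icc 1 1)),
      @MeasurableSet.empty Ω (blockS X (Set.Ici (1 + m))), by simp, by simp⟩
  exact le_csSup ⟨1, phi_bddAbove P X m⟩ hmem

lemma phi_mix {P : Measure Ω} [IsProbabilityMeasure P] {X : ℕ → Ω → ℝ} {m k : ℕ}
    (hk : 1 ≤ k) {A B : Set Ω}
    (hA : MeasurableSet[blockS X (Set.Icc 1 k)] A)
    (hB : MeasurableSet[blockS X (Set.Ici (k + m))] B) :
    |(P (A ∩ B)).toReal - (P A).toReal * (P B).toReal| ≤ phiCoef P X m * (P A).toReal := by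
  rcases eq_or_lt_of_le (ENNReal.toReal_nonneg : 0 ≤ (P A).toReal) with hc | hc
  · have hab : (P (A ∩ B)).toReal ≤ (P A).toReal :=
      ENNReal.toReal_mono (measure_ne_top P A) (measure_mono Set.inter_subset_left)
    have ha : (P (A ∩ B)).toReal = 0 :=
      le_antisymm (hab.trans_eq hc.symm) ENNReal.toReal_nonneg
    rw [ha, ← hc]
    simp
  · have hmem : |(P (A ∩ B)).toReal / (P A).toReal - (P B).toReal| ∈ {r : ℝ | ∃ k ≥ 1,
        ∃ A B : Set Ω,
        MeasurableSet[blockS X (Set.Icc 1 k)] A ∧ MeasurableSet[blockS X (Set.Ici (k + m))] B ∧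
        0 < (P A).toReal ∧
        r = |(P (A ∩ B)).toReal / (P A).toReal - (P B).toReal|} :=
      ⟨k, hk, A, B, hA, hB, hc, rfl⟩
    have h1 : |(P (A ∩ B)).toReal / (P A).toReal - (P B).toReal| ≤ phiCoef P X m :=
      le_csSup ⟨1, phi_bddAbove P X m⟩ hmem
    have hc0 : (P A).toReal ≠ 0 := ne_of_gt hc
    have he : (P (A ∩ B)).toReal - (P A).toReal * (P B).toReal
        = (P A).toReal * ((P (A ∩ B)).toReal / (P A).toReal - (P B).toReal) := by
      field_simp
    rw [he, abs_mul, abs_of_pos hc, mul_comm (phiCoef P X m)]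
    exact mul_le_mul_of_nonneg_left h1 hc.le

lemma stat_shift {P : Measure Ω} (X : ℕ → Ω → ℝ) (hX : ∀ i, Measurable (X i))
    (hstat : Stationary P X) :
    ∀ s : ℕ, Measure.map (fun ω => fun i : ℕ => X (i + (s + 1)) ω) P
      = Measure.map (fun ω => fun i : ℕ => X (i + 1) ω) P := by
  have hshift : Measurable (fun f : ℕ → ℝ => fun i => f (i + 1)) :=
    measurable_pi_lambda _ fun i => measurable_pi_apply (i + 1)
  have hT : ∀ j : ℕ, Measurable (fun ω => fun i : ℕ => X (i + j) ω) :=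
    fun j => measurable_pi_lambda _ fun i => hX (i + j)
  intro s
  induction s with
  | zero => rfl
  | succ t ih =>
    have e1 : (fun ω => fun i : ℕ => X (i + (t + 1 + 1)) ω)
        = (fun f : ℕ → ℝ => fun i => f (i + 1)) ∘ (fun ω => fun i : ℕ => X (i + (t + 1)) ω) := by
      funext ω i
      simp only [Function.comp_apply]
      congr 1
      omega
    have e2 : (fun ω => fun i : ℕ => X (i + 2) ω)
        = (fun f : ℕ → ℝ => fun i => f (i + 1)) ∘ (fun ω => fun i : ℕ => X (i + 1) ω) := by
      funext ω i
      rfl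
    calc Measure.map (fun ω => fun i : ℕ => X (i + (t + 1 + 1)) ω) P
        = Measure.map (fun f : ℕ → ℝ => fun i => f (i + 1))
            (Measure.map (fun ω => fun i : ℕ => X (i + (t + 1)) ω) P) := by
          rw [e1, Measure.map_map hshift (hT (t + 1))]
      _ = Measure.map (fun f : ℕ → ℝ => fun i => f (i + 1))
            (Measure.map (fun ω => fun i : ℕ => X (i + 1) ω) P) := by rw [ih]
      _ = Measure.map (fun ω => fun i : ℕ => X (i + 2) ω) P := by
          rw [Measure.map_map hshift (hT 1), ← e2]
      _ = Measure.map (fun ω => fun i : ℕ => X (i + 1) ω) P := hstat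

lemma stat_apply {P : Measure Ω} (X : ℕ → Ω → ℝ) (hX : ∀ i, Measurable (X i))
    (hstat : Stationary P X) (s : ℕ) {C : Set (ℕ → ℝ)} (hC : MeasurableSet C) :
    P ((fun ω => fun i : ℕ => X (i + (s + 1)) ω) ⁻¹' C)
      = P ((fun ω => fun i : ℕ => X (i + 1) ω) ⁻¹' C) := by
  have hT : ∀ j : ℕ, Measurable (fun ω => fun i : ℕ => X (i + j) ω) :=
    fun j => measurable_pi_lambda _ fun i => hX (i + j)
  rw [← Measure.map_apply (hT (s + 1)) hC, ← Measure.map_apply (hT 1) hC,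
    stat_shift X hX hstat s]

/-- The event `|X k| > x`. -/
def evA (X : ℕ → Ω → ℝ) (x : ℝ) (k : ℕ) : Set Ω := X k ⁻¹' {y : ℝ | x < |y|}

/-- Union of the events `|X (i*m+s)| > x`, `i < r`. -/
def evU (X : ℕ → Ω → ℝ) (x : ℝ) (m s r : ℕ) : Set Ω :=
  ⋃ i ∈ Finset.range r, evA X x (i * m + s)

lemma htS (x : ℝ) : MeasurableSet {y : ℝ | x < |y|} :=
  measurableSet_lt measurable_const measurable_id.abs

lemma evA_meas {X : ℕ → Ω → ℝ} (hX : ∀ i, Measurable (X i)) (x : ℝ) (k : ℕ) :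
    MeasurableSet (evA X x k) := (hX k) (htS x)

lemma evU_meas {X : ℕ → Ω → ℝ} (hX : ∀ i, Measurable (X i)) (x : ℝ) (m s r : ℕ) :
    MeasurableSet (evU X x m s r) :=
  (Finset.range r).measurableSet_biUnion fun i _ => evA_meas hX x (i * m + s)

lemma evU_stat {P : Measure Ω} {X : ℕ → Ω → ℝ} (hX : ∀ i, Measurable (X i))
    (hstat : Stationary P X) (x : ℝ) (m : ℕ) (s r : ℕ) (hs : 1 ≤ s) :
    P (evU X x m s r) = P (evU X x m 1 r) := by
  have hC : MeasurableSet (⋃ i ∈ Finset.range r,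
      (fun f : ℕ → ℝ => f (i * m)) ⁻¹' {y : ℝ | x < |y|}) :=
    (Finset.range r).measurableSet_biUnion fun i _ => (measurable_pi_apply (i * m)) (htS x)
  have hUC : ∀ t : ℕ, evU X x m t r = (fun ω => fun i : ℕ => X (i + t) ω) ⁻¹'
      (⋃ i ∈ Finset.range r, (fun f : ℕ → ℝ => f (i * m)) ⁻¹' {y : ℝ | x < |y|}) := by
    intro t
    ext ω
    simp [evU, evA, Set.mem_iUnion]
  obtain ⟨t, rfl⟩ : ∃ t, s = t + 1 := ⟨s - 1, by omega⟩
  rw [hUC, hUC, stat_apply X hX hstat t hC]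

lemma evU_split (X : ℕ → Ω → ℝ) (x : ℝ) (m r : ℕ) :
    evU X x m 1 (r + 1) = evA X x 1 ∪ evU X x m (1 + m) r := by
  ext ω
  simp only [evU, Set.mem_iUnion, Finset.mem_range, Set.mem_union, exists_prop]
  constructor
  · rintro ⟨i, hi, hω⟩
    cases i with
    | zero => left; simpa using hω
    | succ j =>
      right
      refine ⟨j, by omega, ?_⟩
      have e : (j + 1) * m + 1 = j * m + (1 + m) := by ring
      rwa [e] at hω
  · rintro (h | ⟨j, hj, hω⟩)
    · exact ⟨0, by omega, by simpa using h⟩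
    · refine ⟨j + 1, by omega, ?_⟩
      have e : (j + 1) * m + 1 = j * m + (1 + m) := by ring
      rwa [e]

lemma evU_bounds {P : Measure Ω} [IsProbabilityMeasure P] {X : ℕ → Ω → ℝ}
    (hX : ∀ i, Measurable (X i)) (hstat : Stationary P X) {m : ℕ} (hm : 1 ≤ m)
    (x : ℝ) (r : ℕ) :
    (1 - phiCoef P X m) * (1 - (1 - (P (evA X x 1)).toReal) ^ r)
        ≤ (P (evU X x m 1 r)).toReal ∧
      (P (evU X x m 1 r)).toReal
        ≤ (1 + phiCoef P X m) * (1 - (1 - (P (evA X x 1)).toReal) ^ r) := by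
  set φ := phiCoef P X m with hφdef
  set u := (P (evA X x 1)).toReal with hudef
  have hu0 : 0 ≤ u := ENNReal.toReal_nonneg
  have hu1 : u ≤ 1 := toReal_prob_le_one P _
  have hφ0 : 0 ≤ φ := phi_nonneg P X m
  induction r with
  | zero => simp [evU]
  | succ r ih =>
    obtain ⟨ih1, ih2⟩ := ih
    -- measurability
    have hBm : MeasurableSet[blockS X (Set.Ici (1 + m))] (evU X x m (1 + m) r) := by
      refine @Finset.measurableSet_biUnion Ω ℕ (blockS X (Set.Ici (1 + m))) _
        (Finset.range r) ?_
      intro i _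
      exact mem_blockS (Set.mem_Ici.2 (Nat.le_add_left (1 + m) (i * m))) (htS x)
    have hAm : MeasurableSet[blockS X (Set.Icc 1 1)] (evA X x 1) :=
      mem_blockS (by simp) (htS x)
    have hmix := phi_mix (P := P) (m := m) (le_refl 1) hAm hBm
    -- inclusion-exclusion
    have hie := measure_union_add_inter (μ := P) (evA X x 1) (evU_meas hX x m (1 + m) r)
    have hie' : (P (evA X x 1 ∪ evU X x m (1 + m) r)).toReal
        + (P (evA X x 1 ∩ evU X x m (1 + m) r)).toReal
        = u + (P (evU X x m (1 + m) r)).toReal := by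
      have h := congrArg ENNReal.toReal hie
      rwa [ENNReal.toReal_add (measure_ne_top P _) (measure_ne_top P _),
        ENNReal.toReal_add (measure_ne_top P _) (measure_ne_top P _)] at h
    have hstatB : (P (evU X x m (1 + m) r)).toReal = (P (evU X x m 1 r)).toReal := by
      rw [evU_stat hX hstat x m (1 + m) r (by omega)]
    have hsplit : (P (evU X x m 1 (r + 1))).toReal
        = (P (evA X x 1 ∪ evU X x m (1 + m) r)).toReal := by
      rw [evU_split]
    set v := (P (evU X x m 1 r)).toReal with hvdef
    set vs := (P (evU X x m 1 (r + 1))).toReal with hvsdef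
    have hinter : (P (evA X x 1 ∩ evU X x m (1 + m) r)).toReal = u + v - vs := by
      rw [hsplit] at *
      linarith [hie', hstatB]
    have habs : |u + v - vs - u * v| ≤ φ * u := by
      rw [← hinter]
      calc |(P (evA X x 1 ∩ evU X x m (1 + m) r)).toReal - u * v|
          = |(P (evA X x 1 ∩ evU X x m (1 + m) r)).toReal
              - u * (P (evU X x m (1 + m) r)).toReal| := by rw [hstatB]
        _ ≤ φ * u := hmix
    have habs1 : u + v - u * v - φ * u ≤ vs := by
      have := abs_le.1 habs
      linarith [this.2]
    have habs2 : vs ≤ u + v - u * v + φ * u := by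
      have := abs_le.1 habs
      linarith [this.1]
    have hpow : (1 - u) ^ (r + 1) = (1 - u) ^ r * (1 - u) := pow_succ _ _
    have hpv1 : (1 - u) * ((1 - φ) * (1 - (1 - u) ^ r)) ≤ (1 - u) * v :=
      mul_le_mul_of_nonneg_left ih1 (by linarith)
    have hpv2 : (1 - u) * v ≤ (1 - u) * ((1 + φ) * (1 - (1 - u) ^ r)) :=
      mul_le_mul_of_nonneg_left ih2 (by linarith)
    constructor
    · rw [hpow]
      nlinarith [habs1, hpv1]
    · rw [hpow]
      nlinarith [habs2, hpv2]

lemma iid_prob {P : Measure Ω} [IsProbabilityMeasure P] {Xs X : ℕ → Ω → ℝ}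
    (hXs : ∀ i, Measurable (Xs i))
    (hindep : iIndepFun Xs P)
    (hid : ∀ i, Measure.map (Xs i) P = Measure.map (X 1) P) (hX1 : Measurable (X 1))
    (x : ℝ) (r : ℕ) :
    (P (⋃ k ∈ Finset.Icc 1 r, Xs k ⁻¹' {y : ℝ | x < |y|})).toReal
      = 1 - (1 - (P (X 1 ⁻¹' {y : ℝ | x < |y|})).toReal) ^ r := by
  have hS := htS x
  have hUm : MeasurableSet (⋃ k ∈ Finset.Icc 1 r, Xs k ⁻¹' {y : ℝ | x < |y|}) :=
    (Finset.Icc 1 r).measurableSet_biUnion fun k _ => (hXs k) hS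
  have hcompl : (⋃ k ∈ Finset.Icc 1 r, Xs k ⁻¹' {y : ℝ | x < |y|})ᶜ
      = ⋂ k ∈ Finset.Icc 1 r, Xs k ⁻¹' {y : ℝ | x < |y|}ᶜ := by
    simp [Set.compl_iUnion]
  have hprod : P (⋂ k ∈ Finset.Icc 1 r, Xs k ⁻¹' {y : ℝ | x < |y|}ᶜ)
      = ∏ k ∈ Finset.Icc 1 r, P (Xs k ⁻¹' {y : ℝ | x < |y|}ᶜ) :=
    hindep.meas_biInter fun k _ => ⟨{y : ℝ | x < |y|}ᶜ, hS.compl, rfl⟩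
  have hmarg : ∀ k, P (Xs k ⁻¹' {y : ℝ | x < |y|}ᶜ) = P (X 1 ⁻¹' {y : ℝ | x < |y|}ᶜ) := by
    intro k
    rw [← Measure.map_apply (hXs k) hS.compl, ← Measure.map_apply hX1 hS.compl, hid k]
  have hone : P (X 1 ⁻¹' {y : ℝ | x < |y|}ᶜ) = 1 - P (X 1 ⁻¹' {y : ℝ | x < |y|}) := by
    rw [Set.preimage_compl]
    exact prob_compl_eq_one_sub (hX1 hS)
  have hcval : (P (X 1 ⁻¹' {y : ℝ | x < |y|}ᶜ)).toReal
      = 1 - (P (X 1 ⁻¹' {y : ℝ | x < |y|})).toReal := by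
    rw [hone, ENNReal.toReal_sub_of_le prob_le_one ENNReal.one_ne_top]
    simp
  have hUval : P (⋃ k ∈ Finset.Icc 1 r, Xs k ⁻¹' {y : ℝ | x < |y|})
      = 1 - P (⋂ k ∈ Finset.Icc 1 r, Xs k ⁻¹' {y : ℝ | x < |y|}ᶜ) := by
    rw [← hcompl, prob_compl_eq_one_sub hUm]
    rw [ENNReal.sub_sub_cancel ENNReal.one_ne_top prob_le_one]
  rw [hUval, ENNReal.toReal_sub_of_le prob_le_one ENNReal.one_ne_top]
  simp only [ENNReal.toReal_one]
  congr 1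
  rw [hprod, ENNReal.toReal_prod]
  have : ∀ k ∈ Finset.Icc 1 r, (P (Xs k ⁻¹' {y : ℝ | x < |y|}ᶜ)).toReal
      = 1 - (P (X 1 ⁻¹' {y : ℝ | x < |y|})).toReal := by
    intro k _
    rw [hmarg k, hcval]
  rw [Finset.prod_congr rfl this, Finset.prod_const, Nat.card_Icc]
  simp

lemma sup_event {Y : ℕ → Ω → ℝ} {x : ℝ} (hx : 0 ≤ x) (r : ℕ) :
    {ω | x < ⨆ k ∈ Finset.Icc 1 r, |Y k ω|}
      = ⋃ k ∈ Finset.Icc 1 r, Y k ⁻¹' {y : ℝ | x < |y|} := by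
  ext ω
  simp only [Set.mem_setOf_eq, Set.mem_iUnion, Set.mem_preimage, exists_prop]
  constructor
  · intro h
    by_contra hc
    push_neg at hc
    refine absurd h (not_lt.2 (ciSup_le fun k => ?_))
    show (⨆ _ : k ∈ Finset.Icc 1 r, |Y k ω|) ≤ x
    by_cases hk : k ∈ Finset.Icc 1 r
    · rw [ciSup_pos hk]
      exact hc k hk
    · haveI : IsEmpty (k ∈ Finset.Icc 1 r) := ⟨hk⟩
      rw [Real.iSup_of_isEmpty]
      exact hx
  · rintro ⟨k, hk, hxk⟩
    have hb : BddAbove (Set.range fun k => ⨆ _ : k ∈ Finset.Icc 1 r, |Y k ω|) := by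
      refine ⟨∑ j ∈ Finset.Icc 1 r, |Y j ω|, ?_⟩
      rintro _ ⟨i, rfl⟩
      show (⨆ _ : i ∈ Finset.Icc 1 r, |Y i ω|) ≤ ∑ j ∈ Finset.Icc 1 r, |Y j ω|
      by_cases hi : i ∈ Finset.Icc 1 r
      · rw [ciSup_pos hi]
        exact Finset.single_le_sum (f := fun j => |Y j ω|) (fun j _ => abs_nonneg _) hi
      · haveI : IsEmpty (i ∈ Finset.Icc 1 r) := ⟨hi⟩
        rw [Real.iSup_of_isEmpty]
        exact Finset.sum_nonneg fun j _ => abs_nonneg _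
    calc x < |Y k ω| := hxk
      _ = ⨆ _ : k ∈ Finset.Icc 1 r, |Y k ω| :=
          (ciSup_pos (f := fun _ : k ∈ Finset.Icc 1 r => |Y k ω|) hk).symm
      _ ≤ ⨆ k, ⨆ _ : k ∈ Finset.Icc 1 r, |Y k ω| := le_ciSup hb k

end Stmt5Aux

open Stmt5Aux

theorem stmt5 (P : Measure Ω) [IsProbabilityMeasure P] (X Xs : ℕ → Ω → ℝ)
    (hX : ∀ i, Measurable (X i)) (hXs : ∀ i, Measurable (Xs i))
    (hstat : Stationary P X)
    (hindep : iIndepFun Xs P)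
    (hid : ∀ i, Measure.map (Xs i) P = Measure.map (X 1) P)
    (m : ℕ) (hm : 1 ≤ m) (hphi : phiCoef P X m < 1)
    (n : ℕ) (hn : m ≤ n) (x : ℝ) (hx : 0 ≤ x) :
    (1 - phiCoef P X m) *
        (P {ω | x < ⨆ k ∈ Finset.Icc 1 (n / m), |Xs k ω|}).toReal ≤
      (P {ω | x < ⨆ k ∈ Finset.Icc 1 n, |X k ω|}).toReal ∧
    (P {ω | x < ⨆ k ∈ Finset.Icc 1 n, |X k ω|}).toReal ≤
      (m : ℝ) * (1 + phiCoef P X m) *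
        (P {ω | x < ⨆ k ∈ Finset.Icc 1 (n / m + 1), |Xs k ω|}).toReal := by
  have hm0 : 0 < m := hm
  set q := n / m with hqdef
  have hq1 : 1 ≤ q := (Nat.one_le_div_iff hm0).2 hn
  have hqm : q * m ≤ n := Nat.div_mul_le_self n m
  have hφ0 : 0 ≤ phiCoef P X m := phi_nonneg P X m
  constructor
  · -- lower bound
    rw [sup_event hx, sup_event hx, iid_prob hXs hindep hid (hX 1) x q]
    have hb := (evU_bounds hX hstat hm x q).1
    have hsub : evU X x m 1 q ⊆ ⋃ k ∈ Finset.Icc 1 n, X k ⁻¹' {y : ℝ | x < |y|} := by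
      intro ω hω
      simp only [evU, Set.mem_iUnion, Finset.mem_range, exists_prop] at hω
      obtain ⟨i, hi, hmem⟩ := hω
      refine Set.mem_iUnion₂.2 ⟨i * m + 1, ?_, hmem⟩
      have h2 : i * m + m ≤ q * m := by
        have h3 : (i + 1) * m ≤ q * m := Nat.mul_le_mul_right m (by omega)
        calc i * m + m = (i + 1) * m := by ring
          _ ≤ q * m := h3
      simp only [Finset.mem_Icc]
      omega
    have hmono : (P (evU X x m 1 q)).toReal
        ≤ (P (⋃ k ∈ Finset.Icc 1 n, X k ⁻¹' {y : ℝ | x < |y|})).toReal :=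
      ENNReal.toReal_mono (measure_ne_top P _) (measure_mono hsub)
    have heA : evA X x 1 = X 1 ⁻¹' {y : ℝ | x < |y|} := rfl
    rw [heA] at hb
    linarith
  · -- upper bound
    rw [sup_event hx, sup_event hx, iid_prob hXs hindep hid (hX 1) x (q + 1)]
    have hb := (evU_bounds hX hstat hm x (q + 1)).2
    have hcover : (⋃ k ∈ Finset.Icc 1 n, X k ⁻¹' {y : ℝ | x < |y|})
        ⊆ ⋃ j ∈ Finset.Icc 1 m, evU X x m j (q + 1) := by
      intro ω hω
      obtain ⟨k, hk, hmem⟩ := Set.mem_iUnion₂.1 hω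
      simp only [Finset.mem_Icc] at hk
      have hmod : (k - 1) % m < m := Nat.mod_lt _ hm0
      refine Set.mem_iUnion₂.2 ⟨(k - 1) % m + 1, ?_, ?_⟩
      · simp only [Finset.mem_Icc]
        omega
      · have hdiv : (k - 1) / m ≤ q := Nat.div_le_div_right (by omega)
        have e : (k - 1) / m * m + ((k - 1) % m + 1) = k := by
          have h := Nat.div_add_mod (k - 1) m
          have h2 : (k - 1) / m * m = m * ((k - 1) / m) := Nat.mul_comm _ _
          omega
        simp only [evU, Set.mem_iUnion, Finset.mem_range, exists_prop]
        refine ⟨(k - 1) / m, by omega, ?_⟩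
        show ω ∈ evA X x ((k - 1) / m * m + ((k - 1) % m + 1))
        rw [e]
        exact hmem
    have h1 : P (⋃ k ∈ Finset.Icc 1 n, X k ⁻¹' {y : ℝ | x < |y|})
        ≤ ∑ j ∈ Finset.Icc 1 m, P (evU X x m j (q + 1)) :=
      (measure_mono hcover).trans (measure_biUnion_finset_le _ _)
    have h2 : ∀ j ∈ Finset.Icc 1 m, P (evU X x m j (q + 1)) = P (evU X x m 1 (q + 1)) :=
      fun j hj => evU_stat hX hstat x m j (q + 1) (Finset.mem_Icc.1 hj).1
    have h3 : ∑ j ∈ Finset.Icc 1 m, P (evU X x m j (q + 1))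
        = (m : ENNReal) * P (evU X x m 1 (q + 1)) := by
      rw [Finset.sum_congr rfl h2, Finset.sum_const, Nat.card_Icc]
      simp [nsmul_eq_mul]
    have h4 : (P (⋃ k ∈ Finset.Icc 1 n, X k ⁻¹' {y : ℝ | x < |y|})).toReal
        ≤ (m : ℝ) * (P (evU X x m 1 (q + 1))).toReal := by
      have h5 : ((m : ENNReal) * P (evU X x m 1 (q + 1))) ≠ ⊤ :=
        ENNReal.mul_ne_top (ENNReal.natCast_ne_top m) (measure_ne_top P _)
      have h6 := ENNReal.toReal_mono h5 (h1.trans_eq h3)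
      rwa [ENNReal.toReal_mul, ENNReal.toReal_natCast] at h6
    have heA : evA X x 1 = X 1 ⁻¹' {y : ℝ | x < |y|} := rfl
    rw [heA] at hb
    have hm0' : (0 : ℝ) ≤ m := Nat.cast_nonneg m
    nlinarith [mul_le_mul_of_nonneg_left hb hm0', h4]
end

section
/- Let {X_k} be a strictly stationary sequence with φ-mixing coefficient φ_1 < 1 at lag 1 and with unbounded |X_1| (i.e. sup{x : P[|X_1| ≤ x] < 1} = ∞). Then for every q > 0, x > 0, and n ≥ 1: (1−φ_1)·n·E[|X_1|^q·1_{|X_1| > x}] / (1 + n·P[|X_1| > x]) ≤ E[(max_{1≤k≤n}|X_k|)^q]. -/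
open MeasureTheory Filter Set ProbabilityTheory
open scoped ENNReal

variable {Ω : Type*} [MeasurableSpace Ω]

noncomputable def phiSet (P : Measure Ω) (X : ℕ → Ω → ℝ) (m : ℕ) : Set ℝ :=
  {r | ∃ k ≥ 1, ∃ A B : Set Ω,
    MeasurableSet[blockS X (Set.Icc 1 k)] A ∧ MeasurableSet[blockS X (Set.Ici (k + m))] B ∧
    0 < (P A).toReal ∧
    r = |(P (A ∩ B)).toReal / (P A).toReal - (P B).toReal|}

lemma phiCoef_eq_sSup (P : Measure Ω) (X : ℕ → Ω → ℝ) (m : ℕ) :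
    phiCoef P X m = sSup (phiSet P X m) := rfl

lemma phiSet_bddAbove (P : Measure Ω) [IsProbabilityMeasure P] (X : ℕ → Ω → ℝ) (m : ℕ) :
    BddAbove (phiSet P X m) := by
  refine ⟨1, fun r hr => ?_⟩
  obtain ⟨k, hk, A, B, hA, hB, hApos, rfl⟩ := hr
  have h1 : (P (A ∩ B)).toReal ≤ (P A).toReal :=
    ENNReal.toReal_mono (measure_ne_top _ _) (measure_mono Set.inter_subset_left)
  have h2 : (P (A ∩ B)).toReal / (P A).toReal ≤ 1 := by
    rw [div_le_one hApos]; exact h1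
  have h3 : 0 ≤ (P (A ∩ B)).toReal / (P A).toReal :=
    div_nonneg ENNReal.toReal_nonneg ENNReal.toReal_nonneg
  have h4 : (P B).toReal ≤ 1 := by
    have := ENNReal.toReal_mono (by simp : (1 : ℝ≥0∞) ≠ ⊤) (prob_le_one (μ := P) (s := B))
    simpa using this
  have h5 : 0 ≤ (P B).toReal := ENNReal.toReal_nonneg
  rw [abs_le]; constructor <;> linarith

lemma blockS_measurable {X : ℕ → Ω → ℝ} {s : Set ℕ} {i : ℕ} (hi : i ∈ s)
    {T : Set ℝ} (hT : MeasurableSet T) :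
    MeasurableSet[blockS X s] ((X i) ⁻¹' T) := by
  have h : MeasurableSpace.comap (X i) (inferInstance : MeasurableSpace ℝ) ≤ blockS X s :=
    le_iSup₂ (f := fun i (_ : i ∈ s) =>
      MeasurableSpace.comap (X i) (inferInstance : MeasurableSpace ℝ)) i hi
  exact h _ ⟨T, hT, rfl⟩

lemma phiCoef_nonneg (P : Measure Ω) [IsProbabilityMeasure P] (X : ℕ → Ω → ℝ) (m : ℕ) :
    0 ≤ phiCoef P X m := by
  rw [phiCoef_eq_sSup]
  refine le_csSup (phiSet_bddAbove P X m) ?_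
  exact ⟨1, le_refl 1, Set.univ, ∅, @MeasurableSet.univ Ω (blockS X (Set.Icc 1 1)), @MeasurableSet.empty Ω (blockS X (Set.Ici (1 + m))), by simp, by simp⟩

lemma phi_mix_le (P : Measure Ω) [IsProbabilityMeasure P] (X : ℕ → Ω → ℝ)
    {k : ℕ} (hk : 1 ≤ k) {A B : Set Ω}
    (hA : MeasurableSet[blockS X (Set.Icc 1 k)] A)
    (hB : MeasurableSet[blockS X (Set.Ici (k + 1))] B)
    (hApos : 0 < (P A).toReal) :
    (P (A ∩ B)).toReal ≤ (P A).toReal * ((P B).toReal + phiCoef P X 1) := by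
  have hmem : |(P (A ∩ B)).toReal / (P A).toReal - (P B).toReal| ∈ phiSet P X 1 :=
    ⟨k, hk, A, B, hA, hB, hApos, rfl⟩
  have hle : |(P (A ∩ B)).toReal / (P A).toReal - (P B).toReal| ≤ phiCoef P X 1 := by
    rw [phiCoef_eq_sSup]; exact le_csSup (phiSet_bddAbove P X 1) hmem
  have h2 : (P (A ∩ B)).toReal / (P A).toReal ≤ (P B).toReal + phiCoef P X 1 := by
    have := (le_abs_self _).trans hle; linarith
  have := (div_le_iff₀ hApos).mp h2
  linarith

lemma law_eq_first (P : Measure Ω) (X : ℕ → Ω → ℝ) (hX : ∀ i, Measurable (X i))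
    (hstat : Stationary P X) : ∀ k, 1 ≤ k → Measure.map (X k) P = Measure.map (X 1) P := by
  have hstep : ∀ j : ℕ, Measure.map (X (j + 2)) P = Measure.map (X (j + 1)) P := by
    intro j
    have h2 : Measurable fun ω => fun i : ℕ => X (i + 2) ω :=
      measurable_pi_lambda _ fun i => hX _
    have h1 : Measurable fun ω => fun i : ℕ => X (i + 1) ω :=
      measurable_pi_lambda _ fun i => hX _
    have hcongr := congrArg (Measure.map (fun f : ℕ → ℝ => f j)) hstat
    rw [Measure.map_map (measurable_pi_apply j) h2,
        Measure.map_map (measurable_pi_apply j) h1] at hcongr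
    exact hcongr
  intro k hk
  induction k with
  | zero => omega
  | succ k ih =>
    rcases Nat.lt_or_ge 1 (k + 1) with h | h
    · have hk1 : 1 ≤ k := by omega
      have hs := hstep (k - 1)
      rw [show k - 1 + 2 = k + 1 by omega, show k - 1 + 1 = k by omega] at hs
      rw [hs]; exact ih hk1
    · have : k = 0 := by omega
      subst this; rfl

lemma lt_rpow_iff_aux {a t q : ℝ} (ha : 0 ≤ a) (ht : 0 < t) (hq : 0 < q) :
    t < a ^ q ↔ t ^ (1 / q) < a := by
  have hq' : (0:ℝ) < 1 / q := by positivity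
  constructor
  · intro h
    have h2 : t ^ (1 / q) < (a ^ q) ^ (1 / q) := Real.rpow_lt_rpow ht.le h hq'
    rwa [← Real.rpow_mul ha, mul_one_div_cancel hq.ne', Real.rpow_one] at h2
  · intro h
    have h2 : (t ^ (1 / q)) ^ q < a ^ q :=
      Real.rpow_lt_rpow (Real.rpow_nonneg ht.le _) h hq
    rwa [← Real.rpow_mul ht.le, one_div_mul_cancel hq.ne', Real.rpow_one] at h2

lemma key_level (P : Measure Ω) [IsProbabilityMeasure P] (X : ℕ → Ω → ℝ)
    (hX : ∀ i, Measurable (X i)) (hstat : Stationary P X)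
    (n : ℕ) (hn : 1 ≤ n) (y : ℝ) (V : Set Ω)
    (hUV : ∀ k ∈ Finset.Icc 1 n, {ω | y < |X k ω|} ⊆ V) :
    (1 - phiCoef P X 1) * (n * (P {ω | y < |X 1 ω|}).toReal) ≤
      (1 + n * (P {ω | y < |X 1 ω|}).toReal) * (P V).toReal := by
  classical
  set φ := phiCoef P X 1 with hφdef
  have hφ0 : 0 ≤ φ := phiCoef_nonneg P X 1
  have hTset : ∀ z : ℝ, MeasurableSet {v : ℝ | z < |v|} := fun z =>
    measurableSet_lt measurable_const measurable_id.abs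
  set Cs : ℕ → Set Ω := fun k => {ω | y < |X k ω|} with hCs
  have hCm : ∀ k, MeasurableSet (Cs k) := fun k =>
    measurableSet_lt measurable_const (hX k).abs
  set U : Set Ω := ⋃ k ∈ Finset.Icc 1 n, Cs k with hU
  set Bs : ℕ → Set Ω := fun k => ⋃ j ∈ Finset.Ioc k n, Cs j with hBs
  set E : ℕ → Set Ω := fun k => Cs k \ Bs k with hE
  have hBm : ∀ k, MeasurableSet (Bs k) :=
    fun k => Finset.measurableSet_biUnion _ fun j _ => hCm j
  have hEm : ∀ k, MeasurableSet (E k) := fun k => (hCm k).diff (hBm k)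
  have hUmeas : MeasurableSet U := Finset.measurableSet_biUnion _ fun j _ => hCm j
  have hUsubV : U ⊆ V := Set.iUnion₂_subset fun k hk => hUV k hk
  have hBU : ∀ k, 1 ≤ k → Bs k ⊆ U := by
    intro k hk
    refine Set.iUnion₂_subset fun j hj => ?_
    have hj' := Finset.mem_Ioc.mp hj
    exact Set.subset_biUnion_of_mem (Finset.mem_Icc.mpr ⟨by omega, hj'.2⟩)
  have hCU : ∀ k ∈ Finset.Icc 1 n, Cs k ⊆ U := fun k hk => Set.subset_biUnion_of_mem hk
  -- stationarity
  have hPC : ∀ k, 1 ≤ k → P (Cs k) = P (Cs 1) := by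
    intro k hk
    have hlaw := law_eq_first P X hX hstat k hk
    have h1 : Cs k = X k ⁻¹' {v | y < |v|} := rfl
    have h2 : Cs 1 = X 1 ⁻¹' {v | y < |v|} := rfl
    rw [h1, h2, ← Measure.map_apply (hX k) (hTset y), ← Measure.map_apply (hX 1) (hTset y), hlaw]
  -- disjointness
  have hdisj : ((Finset.Icc 1 n : Finset ℕ) : Set ℕ).PairwiseDisjoint E := by
    have main : ∀ k l, l ∈ Finset.Icc 1 n → k < l → Disjoint (E k) (E l) := by
      intro k l hl hkl
      rw [Set.disjoint_left]
      rintro ω ⟨hωC, hωB⟩ ⟨hωC', _⟩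
      exact hωB (Set.mem_iUnion₂.mpr
        ⟨l, Finset.mem_Ioc.mpr ⟨hkl, (Finset.mem_Icc.mp hl).2⟩, hωC'⟩)
    intro k hk l hl hkl
    rcases lt_trichotomy k l with h | h | h
    · exact main k l hl h
    · exact absurd h hkl
    · exact (main l k hk h).symm
  -- per-k estimate
  have hperk : ∀ k ∈ Finset.Icc 1 n,
      (P (Cs 1)).toReal * (1 - φ) ≤ (P (E k)).toReal + (P (Cs 1)).toReal * (P U).toReal := by
    intro k hk
    obtain ⟨hk1, hkn⟩ := Finset.mem_Icc.mp hk
    have hPk : P (Cs k) = P (Cs 1) := hPC k hk1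
    by_cases hpos : 0 < (P (Cs k)).toReal
    · have hAmem : MeasurableSet[blockS X (Set.Icc 1 k)] (Cs k) :=
        blockS_measurable (Set.mem_Icc.mpr ⟨hk1, le_refl k⟩) (hTset y)
      have hBmem : MeasurableSet[blockS X (Set.Ici (k + 1))] (Bs k) := by
        refine Finset.measurableSet_biUnion _ fun j hj => ?_
        have hj' := Finset.mem_Ioc.mp hj
        exact blockS_measurable (Set.mem_Ici.mpr (by omega)) (hTset y)
      have hmix := phi_mix_le P X hk1 hAmem hBmem hpos
      have hsplit := measure_inter_add_diff (μ := P) (Cs k) (hBm k)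
      have hsplit' : (P (Cs k ∩ Bs k)).toReal + (P (E k)).toReal = (P (Cs k)).toReal := by
        rw [← ENNReal.toReal_add (measure_ne_top _ _) (measure_ne_top _ _), hsplit]
      have hPBU : (P (Bs k)).toReal ≤ (P U).toReal :=
        ENNReal.toReal_mono (measure_ne_top _ _) (measure_mono (hBU k hk1))
      have hmul : (P (Cs k)).toReal * (P (Bs k)).toReal ≤ (P (Cs k)).toReal * (P U).toReal :=
        mul_le_mul_of_nonneg_left hPBU hpos.le
      rw [← hPk]
      nlinarith [hmix, hsplit', hmul]
    · have h0 : (P (Cs 1)).toReal = 0 := by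
        rw [← hPk]
        have := ENNReal.toReal_nonneg (a := P (Cs k)); linarith
      rw [h0]
      have := ENNReal.toReal_nonneg (a := P (E k)); linarith
  -- summation
  have hsumE : ∑ k ∈ Finset.Icc 1 n, (P (E k)).toReal ≤ (P U).toReal := by
    have h1 : ∑ k ∈ Finset.Icc 1 n, P (E k) = P (⋃ k ∈ Finset.Icc 1 n, E k) :=
      (measure_biUnion_finset hdisj fun k _ => hEm k).symm
    have h2 : P (⋃ k ∈ Finset.Icc 1 n, E k) ≤ P U :=
      measure_mono (Set.iUnion₂_subset fun k hk => Set.diff_subset.trans (hCU k hk))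
    have h3 : (∑ k ∈ Finset.Icc 1 n, P (E k)).toReal = ∑ k ∈ Finset.Icc 1 n, (P (E k)).toReal :=
      ENNReal.toReal_sum fun k _ => measure_ne_top _ _
    rw [← h3, h1]
    exact ENNReal.toReal_mono (measure_ne_top _ _) h2
  have hcard : (Finset.Icc 1 n).card = n := by
    rw [Nat.card_Icc]; omega
  have hsumL : ∑ k ∈ Finset.Icc 1 n, ((P (Cs 1)).toReal * (1 - φ))
      ≤ ∑ k ∈ Finset.Icc 1 n, ((P (E k)).toReal + (P (Cs 1)).toReal * (P U).toReal) :=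
    Finset.sum_le_sum hperk
  rw [Finset.sum_const, hcard, Finset.sum_add_distrib, Finset.sum_const, hcard] at hsumL
  simp only [nsmul_eq_mul] at hsumL
  have hUV' : (P U).toReal ≤ (P V).toReal :=
    ENNReal.toReal_mono (measure_ne_top _ _) (measure_mono hUsubV)
  have hp0 : 0 ≤ (P (Cs 1)).toReal := ENNReal.toReal_nonneg
  have hU0 : 0 ≤ (P U).toReal := ENNReal.toReal_nonneg
  have hgoal1 : (1 - φ) * (n * (P (Cs 1)).toReal) ≤
      (1 + n * (P (Cs 1)).toReal) * (P U).toReal := by nlinarith [hsumL]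
  have hmono : (1 + n * (P (Cs 1)).toReal) * (P U).toReal ≤
      (1 + n * (P (Cs 1)).toReal) * (P V).toReal :=
    mul_le_mul_of_nonneg_left hUV' (by positivity)
  calc (1 - φ) * (n * (P (Cs 1)).toReal) ≤ (1 + n * (P (Cs 1)).toReal) * (P U).toReal := hgoal1
    _ ≤ (1 + n * (P (Cs 1)).toReal) * (P V).toReal := hmono

theorem stmt6 (P : Measure Ω) [IsProbabilityMeasure P] (X : ℕ → Ω → ℝ)
    (hX : ∀ i, Measurable (X i)) (hstat : Stationary P X)
    (hphi : phiCoef P X 1 < 1)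
    (hunbd : ∀ x : ℝ, (P {ω | |X 1 ω| ≤ x}).toReal < 1)
    (q x : ℝ) (hq : 0 < q) (hx : 0 < x) (n : ℕ) (hn : 1 ≤ n) :
    ENNReal.ofReal (1 - phiCoef P X 1) * (n : ℝ≥0∞) *
        (∫⁻ ω in {ω | x < |X 1 ω|}, ENNReal.ofReal (|X 1 ω| ^ q) ∂P) /
        (1 + (n : ℝ≥0∞) * P {ω | x < |X 1 ω|}) ≤
      ∫⁻ ω, ENNReal.ofReal ((⨆ k ∈ Finset.Icc 1 n, |X k ω|) ^ q) ∂P := by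
  classical
  set φ := phiCoef P X 1 with hφdef
  have hφ0 : 0 ≤ φ := phiCoef_nonneg P X 1
  have h1φ : (0:ℝ) ≤ 1 - φ := by linarith
  have h1n : 1 ∈ Finset.Icc 1 n := Finset.mem_Icc.mpr ⟨le_refl 1, hn⟩
  have hne : (Finset.Icc 1 n).Nonempty := ⟨1, h1n⟩
  set M : Ω → ℝ := fun ω => ⨆ k ∈ Finset.Icc 1 n, |X k ω| with hM
  -- basic facts about M
  have hMle : ∀ ω, ∀ k ∈ Finset.Icc 1 n, |X k ω| ≤ M ω := by
    intro ω k hk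
    have hbdd : BddAbove (Set.range fun j => ⨆ _ : j ∈ Finset.Icc 1 n, |X j ω|) := by
      refine ⟨(Finset.Icc 1 n).sup' hne (fun j => |X j ω|) ⊔ 0, ?_⟩
      rintro r ⟨j, rfl⟩
      show (⨆ _ : j ∈ Finset.Icc 1 n, |X j ω|) ≤ _
      by_cases hj : j ∈ Finset.Icc 1 n
      · rw [ciSup_pos (f := fun _ : j ∈ Finset.Icc 1 n => |X j ω|) hj]
        exact le_sup_of_le_left (Finset.le_sup' (fun j => |X j ω|) hj)
      · haveI : IsEmpty (j ∈ Finset.Icc 1 n : Prop) := by simpa using hj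
        rw [Real.iSup_of_isEmpty]; exact le_sup_right
    calc |X k ω| = ⨆ _ : k ∈ Finset.Icc 1 n, |X k ω| :=
          (ciSup_pos (f := fun _ : k ∈ Finset.Icc 1 n => |X k ω|) hk).symm
      _ ≤ M ω := le_ciSup hbdd k
  have hM0 : ∀ ω, 0 ≤ M ω := fun ω => (abs_nonneg _).trans (hMle ω 1 h1n)
  have hMeq : ∀ ω, M ω = (Finset.Icc 1 n).sup' hne fun k => |X k ω| := by
    intro ω
    refine le_antisymm (ciSup_le fun j => ?_) (Finset.sup'_le _ _ fun k hk => hMle ω k hk)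
    by_cases hj : j ∈ Finset.Icc 1 n
    · rw [ciSup_pos (f := fun _ : j ∈ Finset.Icc 1 n => |X j ω|) hj]
      exact Finset.le_sup' (fun k => |X k ω|) hj
    · haveI : IsEmpty (j ∈ Finset.Icc 1 n : Prop) := by simpa using hj
      rw [Real.iSup_of_isEmpty]
      exact (abs_nonneg (X 1 ω)).trans (Finset.le_sup' (fun k => |X k ω|) h1n)
  have hMmeas : Measurable M := by
    have h1 : M = fun ω => (Finset.Icc 1 n).sup' hne fun k => |X k ω| := funext hMeq
    rw [h1]
    have h2 := Finset.measurable_sup' (ι := ℕ) hne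
      (f := fun k => fun ω => |X k ω|) (fun k _ => (hX k).abs)
    have h3 : ((Finset.Icc 1 n).sup' hne fun k => fun ω => |X k ω|)
        = fun ω => (Finset.Icc 1 n).sup' hne fun k => |X k ω| := by
      funext ω; exact Finset.sup'_apply hne (fun k => fun ω => |X k ω|) ω
    rwa [h3] at h2
  have hMq_meas : Measurable fun ω => M ω ^ q :=
    (Real.continuous_rpow_const hq.le).measurable.comp hMmeas
  have hX1q_meas : Measurable fun ω => |X 1 ω| ^ q :=
    (Real.continuous_rpow_const hq.le).measurable.comp (hX 1).abs
  have hSmeas : MeasurableSet {ω | x < |X 1 ω|} :=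
    measurableSet_lt measurable_const (hX 1).abs
  have htmeas : ∀ t : ℝ, MeasurableSet {ω | t < |X 1 ω| ^ q} := fun t =>
    measurableSet_lt measurable_const hX1q_meas
  -- pointwise inequality in t
  have hpt : ∀ t ∈ Set.Ioi (0:ℝ),
      ENNReal.ofReal (1 - φ) * (n : ℝ≥0∞) *
          (P.restrict {ω | x < |X 1 ω|}) {ω | t < |X 1 ω| ^ q} ≤
        (1 + (n : ℝ≥0∞) * P {ω | x < |X 1 ω|}) * P {ω | t < M ω ^ q} := by
    intro t ht
    rw [Set.mem_Ioi] at ht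
    set y := max x (t ^ (1 / q)) with hy
    have hxy : x ≤ y := le_max_left _ _
    have hty : t ^ (1 / q) ≤ y := le_max_right _ _
    have hrest : (P.restrict {ω | x < |X 1 ω|}) {ω | t < |X 1 ω| ^ q}
        = P {ω | y < |X 1 ω|} := by
      rw [Measure.restrict_apply (htmeas t)]
      congr 1
      ext ω
      simp only [Set.mem_inter_iff, Set.mem_setOf_eq, hy, max_lt_iff]
      rw [lt_rpow_iff_aux (abs_nonneg _) ht hq]
      tauto
    have hUV : ∀ k ∈ Finset.Icc 1 n, {ω | y < |X k ω|} ⊆ {ω | t < M ω ^ q} := by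
      intro k hk ω hω
      rw [Set.mem_setOf_eq] at hω ⊢
      rw [lt_rpow_iff_aux (hM0 ω) ht hq]
      exact lt_of_le_of_lt hty (lt_of_lt_of_le hω (hMle ω k hk))
    have hkey := key_level P X hX hstat n hn y {ω | t < M ω ^ q} hUV
    have hyx : (P {ω | y < |X 1 ω|}).toReal ≤ (P {ω | x < |X 1 ω|}).toReal := by
      refine ENNReal.toReal_mono (measure_ne_top _ _) (measure_mono ?_)
      intro ω hω; exact lt_of_le_of_lt hxy hω
    have hV0 : 0 ≤ (P {ω | t < M ω ^ q}).toReal := ENNReal.toReal_nonneg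
    have hreal : (1 - φ) * ((n : ℝ) * (P {ω | y < |X 1 ω|}).toReal) ≤
        (1 + (n : ℝ) * (P {ω | x < |X 1 ω|}).toReal) * (P {ω | t < M ω ^ q}).toReal := by
      refine hkey.trans ?_
      have : (1 + (n:ℝ) * (P {ω | y < |X 1 ω|}).toReal) ≤
          (1 + (n:ℝ) * (P {ω | x < |X 1 ω|}).toReal) := by
        have : (0:ℝ) ≤ n := Nat.cast_nonneg n
        nlinarith
      exact mul_le_mul_of_nonneg_right this hV0
    rw [hrest]
    calc ENNReal.ofReal (1 - φ) * (n : ℝ≥0∞) * P {ω | y < |X 1 ω|}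
        = ENNReal.ofReal ((1 - φ) * ((n:ℝ) * (P {ω | y < |X 1 ω|}).toReal)) := by
          rw [ENNReal.ofReal_mul h1φ, ENNReal.ofReal_mul (Nat.cast_nonneg n),
            ENNReal.ofReal_natCast, ENNReal.ofReal_toReal (measure_ne_top _ _), mul_assoc]
      _ ≤ ENNReal.ofReal ((1 + (n:ℝ) * (P {ω | x < |X 1 ω|}).toReal) *
            (P {ω | t < M ω ^ q}).toReal) := ENNReal.ofReal_le_ofReal hreal
      _ = (1 + (n : ℝ≥0∞) * P {ω | x < |X 1 ω|}) * P {ω | t < M ω ^ q} := by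
          rw [ENNReal.ofReal_mul (by positivity), ENNReal.ofReal_toReal (measure_ne_top _ _),
            ENNReal.ofReal_add (by norm_num) (by positivity),
            ENNReal.ofReal_mul (Nat.cast_nonneg n), ENNReal.ofReal_natCast,
            ENNReal.ofReal_toReal (measure_ne_top _ _), ENNReal.ofReal_one]
  -- layer cake representations
  have hLC1 : (∫⁻ ω in {ω | x < |X 1 ω|}, ENNReal.ofReal (|X 1 ω| ^ q) ∂P)
      = ∫⁻ t in Set.Ioi (0:ℝ), (P.restrict {ω | x < |X 1 ω|}) {ω | t < |X 1 ω| ^ q} :=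
    lintegral_eq_lintegral_meas_lt _
      (ae_of_all _ fun ω => Real.rpow_nonneg (abs_nonneg _) q) hX1q_meas.aemeasurable
  have hLC2 : (∫⁻ ω, ENNReal.ofReal (M ω ^ q) ∂P)
      = ∫⁻ t in Set.Ioi (0:ℝ), P {ω | t < M ω ^ q} :=
    lintegral_eq_lintegral_meas_lt _
      (ae_of_all _ fun ω => Real.rpow_nonneg (hM0 ω) q) hMq_meas.aemeasurable
  set D : ℝ≥0∞ := 1 + (n : ℝ≥0∞) * P {ω | x < |X 1 ω|} with hD
  have hD0 : D ≠ 0 := by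
    have h1 : (1:ℝ≥0∞) ≤ D := by rw [hD]; exact le_self_add
    exact (lt_of_lt_of_le zero_lt_one h1).ne'
  have hDt : D ≠ ⊤ := by
    rw [hD]
    exact ENNReal.add_ne_top.mpr ⟨ENNReal.one_ne_top,
      ENNReal.mul_ne_top (ENNReal.natCast_ne_top n) (measure_ne_top _ _)⟩
  rw [ENNReal.div_le_iff_le_mul (Or.inl hD0) (Or.inl hDt)]
  have hcne : ENNReal.ofReal (1 - φ) * (n : ℝ≥0∞) ≠ ⊤ :=
    ENNReal.mul_ne_top ENNReal.ofReal_ne_top (ENNReal.natCast_ne_top n)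
  have hmain : ENNReal.ofReal (1 - φ) * (n : ℝ≥0∞) *
      (∫⁻ ω in {ω | x < |X 1 ω|}, ENNReal.ofReal (|X 1 ω| ^ q) ∂P) ≤
      (∫⁻ ω, ENNReal.ofReal (M ω ^ q) ∂P) * D := by
    calc ENNReal.ofReal (1 - φ) * (n : ℝ≥0∞) *
        (∫⁻ ω in {ω | x < |X 1 ω|}, ENNReal.ofReal (|X 1 ω| ^ q) ∂P)
        = ∫⁻ t in Set.Ioi (0:ℝ), ENNReal.ofReal (1 - φ) * (n : ℝ≥0∞) *
            (P.restrict {ω | x < |X 1 ω|}) {ω | t < |X 1 ω| ^ q} := by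
          rw [hLC1, ← lintegral_const_mul' _ _ hcne]
      _ ≤ ∫⁻ t in Set.Ioi (0:ℝ), D * P {ω | t < M ω ^ q} := by
          refine lintegral_mono_ae ?_
          refine (ae_restrict_iff' measurableSet_Ioi).2 (ae_of_all _ ?_)
          intro t ht
          exact hpt t ht
      _ = D * ∫⁻ t in Set.Ioi (0:ℝ), P {ω | t < M ω ^ q} := lintegral_const_mul' _ _ hDt
      _ = (∫⁻ ω, ENNReal.ofReal (M ω ^ q) ∂P) * D := by rw [← hLC2, mul_comm]
  exact hmain
end

section
/- Let X be a real random variable with E|X| < ∞, and X̃ an independent copy of X; write X̂ = X − X̃. If the truncated second moment function x ↦ E[X̂²·1_{|X̂| ≤ x}] is slowly varying (in the sense of Karamata) as x → ∞, then x ↦ E[X²·1_{|X| ≤ x}] is also slowly varying. -/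
open MeasureTheory Filter Set ProbabilityTheory

variable {Ω : Type*} [MeasurableSpace Ω]

namespace Stmt8Aux

variable {Ω : Type*} [MeasurableSpace Ω]

noncomputable def HH (P : Measure Ω) (Y : Ω → ℝ) (x : ℝ) : ℝ :=
  ∫ ω in {ω | |Y ω| ≤ x}, (Y ω) ^ 2 ∂P

noncomputable def TT (P : Measure Ω) (Y : Ω → ℝ) (x : ℝ) : ℝ :=
  (P {ω | x < |Y ω|}).toReal

variable {P : Measure Ω} [IsProbabilityMeasure P] {Y : Ω → ℝ}

lemma mSle (hY : Measurable Y) (x : ℝ) : MeasurableSet {ω | |Y ω| ≤ x} :=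
  measurableSet_le hY.abs measurable_const

lemma mSgt (hY : Measurable Y) (x : ℝ) : MeasurableSet {ω | x < |Y ω|} :=
  measurableSet_lt measurable_const hY.abs

lemma intOn (hY : Measurable Y) (x : ℝ) :
    IntegrableOn (fun ω => (Y ω) ^ 2) {ω | |Y ω| ≤ x} P := by
  apply Measure.integrableOn_of_bounded (M := x ^ 2) (measure_ne_top P _)
    ((hY.pow_const 2).aestronglyMeasurable)
  filter_upwards [ae_restrict_mem (mSle hY x)] with ω hω
  have h1 : |Y ω| ≤ x := hω
  have : (Y ω) ^ 2 ≤ x ^ 2 := by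
    calc (Y ω) ^ 2 = |Y ω| ^ 2 := (sq_abs _).symm
    _ ≤ x ^ 2 := pow_le_pow_left₀ (abs_nonneg _) h1 2
  simpa [Real.norm_eq_abs, abs_of_nonneg (sq_nonneg (Y ω))] using this

lemma HH_nonneg (hY : Measurable Y) (x : ℝ) : 0 ≤ HH P Y x :=
  setIntegral_nonneg (mSle hY x) fun ω _ => sq_nonneg _

lemma HH_mono (hY : Measurable Y) : Monotone (HH P Y) := by
  intro a b hab
  exact setIntegral_mono_set (intOn hY b)
    (Filter.Eventually.of_forall fun ω => sq_nonneg _)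
    (HasSubset.Subset.eventuallyLE fun ω hω => le_trans hω hab)

lemma TT_nonneg (x : ℝ) : 0 ≤ TT P Y x := ENNReal.toReal_nonneg

lemma TT_anti : Antitone (TT P Y) := by
  intro a b hab
  exact ENNReal.toReal_mono (measure_ne_top P _)
    (measure_mono fun ω hω => lt_of_le_of_lt hab hω)

lemma TT_tendsto (hY : Measurable Y) : Tendsto (TT P Y) atTop (nhds 0) := by
  have h1 : Tendsto (fun n : ℕ => TT P Y n) atTop (nhds 0) := by
    have h2 : Tendsto (fun n : ℕ => P {ω | (n : ℝ) < |Y ω|}) atTop (nhds (P (⋂ n : ℕ, {ω | (n : ℝ) < |Y ω|}))) := by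
      have := tendsto_measure_iInter_atTop (μ := P)
        (s := fun n : ℕ => {ω | (n : ℝ) < |Y ω|})
        (fun n => (mSgt hY n).nullMeasurableSet)
        (fun m n hmn ω hω => lt_of_le_of_lt (show (m:ℝ) ≤ n from Nat.cast_le.mpr hmn) hω)
        ⟨0, measure_ne_top P _⟩
      exact this
    have h3 : (⋂ n : ℕ, {ω | (n : ℝ) < |Y ω|}) = ∅ := by
      ext ω
      simp only [mem_iInter, mem_setOf_eq, mem_empty_iff_false, iff_false, not_forall, not_lt]
      obtain ⟨n, hn⟩ := exists_nat_ge (|Y ω|)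
      exact ⟨n, hn⟩
    rw [h3, measure_empty] at h2
    exact (ENNReal.tendsto_toReal (by norm_num)).comp h2
  have h4 : Tendsto (fun x : ℝ => TT P Y (⌊x⌋₊ : ℕ)) atTop (nhds 0) :=
    h1.comp tendsto_nat_floor_atTop
  apply tendsto_of_tendsto_of_tendsto_of_le_of_le' tendsto_const_nhds h4
  · exact Filter.Eventually.of_forall fun x => TT_nonneg x
  · filter_upwards [eventually_ge_atTop (0:ℝ)] with x hx
    exact TT_anti (Nat.floor_le hx)

lemma TT_sub (hY : Measurable Y) {a b : ℝ} (hab : a ≤ b) :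
    TT P Y a - TT P Y b = (P ({ω | a < |Y ω|} ∩ {ω | |Y ω| ≤ b})).toReal := by
  have hsplit : {ω | a < |Y ω|} = ({ω | a < |Y ω|} ∩ {ω | |Y ω| ≤ b}) ∪ {ω | b < |Y ω|} := by
    ext ω; simp only [mem_union, mem_inter_iff, mem_setOf_eq]
    constructor
    · intro h; rcases le_or_gt (|Y ω|) b with h2 | h2
      · exact Or.inl ⟨h, h2⟩
      · exact Or.inr h2
    · rintro (⟨h, _⟩ | h); · exact h
      · exact lt_of_le_of_lt hab h
  have hdisj : Disjoint ({ω | a < |Y ω|} ∩ {ω | |Y ω| ≤ b}) {ω | b < |Y ω|} := by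
    rw [Set.disjoint_left]; rintro ω ⟨_, h2⟩ h3
    exact absurd (show |Y ω| ≤ b from h2) (not_le.mpr h3)
  have hme := measure_union (μ := P) hdisj (mSgt hY b)
  rw [← hsplit] at hme
  unfold TT
  rw [hme, ENNReal.toReal_add (measure_ne_top P _) (measure_ne_top P _)]
  ring

lemma HH_diff_eq (hY : Measurable Y) {a b : ℝ} (hab : a ≤ b) :
    HH P Y b - HH P Y a = ∫ ω in {ω | a < |Y ω|} ∩ {ω | |Y ω| ≤ b}, (Y ω) ^ 2 ∂P := by
  have hsplit : {ω | |Y ω| ≤ b} = {ω | |Y ω| ≤ a} ∪ ({ω | a < |Y ω|} ∩ {ω | |Y ω| ≤ b}) := by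
    ext ω; simp only [mem_union, mem_inter_iff, mem_setOf_eq]
    constructor
    · intro h; rcases le_or_gt (|Y ω|) a with h2 | h2
      · exact Or.inl h2
      · exact Or.inr ⟨h2, h⟩
    · rintro (h | ⟨_, h⟩); · exact le_trans h hab
      · exact h
  have hdisj : Disjoint {ω | |Y ω| ≤ a} ({ω | a < |Y ω|} ∩ {ω | |Y ω| ≤ b}) := by
    rw [Set.disjoint_left]; rintro ω h1 ⟨h2, _⟩
    exact absurd (show |Y ω| ≤ a from h1) (not_le.mpr h2)
  have hie := setIntegral_union (f := fun ω => (Y ω) ^ 2) (μ := P) hdisj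
    ((mSgt hY a).inter (mSle hY b))
    ((intOn hY b).mono_set (fun ω h => le_trans (show |Y ω| ≤ a from h) hab))
    ((intOn hY b).mono_set inter_subset_right)
  unfold HH
  nth_rewrite 1 [hsplit]
  rw [hie]; ring

lemma HH_diff_ge (hY : Measurable Y) {a b : ℝ} (ha : 0 ≤ a) (hab : a ≤ b) :
    a ^ 2 * (TT P Y a - TT P Y b) ≤ HH P Y b - HH P Y a := by
  rw [HH_diff_eq hY hab, TT_sub hY hab]
  apply setIntegral_ge_of_const_le_real ((mSgt hY a).inter (mSle hY b)) (measure_ne_top P _)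
  · rintro ω ⟨h1, _⟩
    calc a ^ 2 ≤ |Y ω| ^ 2 := pow_le_pow_left₀ ha (le_of_lt h1) 2
    _ = (Y ω) ^ 2 := sq_abs _
  · exact (intOn hY b).mono_set inter_subset_right

lemma HH_diff_le (hY : Measurable Y) {a b : ℝ} (hab : a ≤ b) :
    HH P Y b - HH P Y a ≤ b ^ 2 * TT P Y a := by
  rw [HH_diff_eq hY hab]
  calc ∫ ω in {ω | a < |Y ω|} ∩ {ω | |Y ω| ≤ b}, (Y ω) ^ 2 ∂P
      ≤ ∫ _ω in {ω | a < |Y ω|} ∩ {ω | |Y ω| ≤ b}, b ^ 2 ∂P := by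
        apply setIntegral_mono_on ((intOn hY b).mono_set inter_subset_right)
          (integrableOn_const (measure_ne_top P _))
          ((mSgt hY a).inter (mSle hY b))
        rintro ω ⟨_, h2⟩
        calc (Y ω) ^ 2 = |Y ω| ^ 2 := (sq_abs _).symm
        _ ≤ b ^ 2 := pow_le_pow_left₀ (abs_nonneg _) h2 2
    _ = b ^ 2 * (P ({ω | a < |Y ω|} ∩ {ω | |Y ω| ≤ b})).toReal := by
        rw [setIntegral_const, smul_eq_mul, measureReal_def]; ring
    _ ≤ b ^ 2 * TT P Y a := by
        apply mul_le_mul_of_nonneg_left _ (sq_nonneg b)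
        exact ENNReal.toReal_mono (measure_ne_top P _) (measure_mono inter_subset_left)


lemma HH_pos (hY : Measurable Y) (hne : P {ω | Y ω ≠ 0} ≠ 0) :
    ∃ x₀ : ℝ, 0 < x₀ ∧ 0 < HH P Y x₀ := by
  have hmeas : MeasurableSet {ω | Y ω ≠ 0} := by
    have := (hY (measurableSet_singleton (0:ℝ))).compl
    simpa [Set.preimage, Set.compl_setOf] using this
  have hunion : {ω | Y ω ≠ 0} = ⋃ n : ℕ, ({ω | |Y ω| ≤ n} ∩ {ω | Y ω ≠ 0}) := by
    ext ω
    simp only [mem_iUnion, mem_inter_iff, mem_setOf_eq]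
    constructor
    · intro h
      obtain ⟨n, hn⟩ := exists_nat_ge (|Y ω|)
      exact ⟨n, hn, h⟩
    · rintro ⟨n, _, h⟩; exact h
  have hex : ∃ n : ℕ, P ({ω | |Y ω| ≤ n} ∩ {ω | Y ω ≠ 0}) ≠ 0 := by
    by_contra h
    push_neg at h
    apply hne
    rw [hunion]
    exact measure_iUnion_null h
  obtain ⟨n, hn⟩ := hex
  refine ⟨(n : ℝ) + 1, by positivity, ?_⟩
  have hsub : ({ω | |Y ω| ≤ n} ∩ {ω | Y ω ≠ 0}) ⊆ {ω | |Y ω| ≤ (n : ℝ) + 1} :=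
    fun ω hω => le_trans (show |Y ω| ≤ (n:ℝ) from hω.1) (by linarith)
  have hpos : 0 < ∫ ω in ({ω | |Y ω| ≤ n} ∩ {ω | Y ω ≠ 0}), (Y ω) ^ 2 ∂P := by
    rw [setIntegral_pos_iff_support_of_nonneg_ae
      (Filter.Eventually.of_forall fun ω => sq_nonneg _)
      (((intOn hY ((n : ℝ) + 1)).mono_set hsub))]
    have : ({ω | |Y ω| ≤ n} ∩ {ω | Y ω ≠ 0}) ⊆
        Function.support (fun ω => (Y ω) ^ 2) ∩ ({ω | |Y ω| ≤ n} ∩ {ω | Y ω ≠ 0}) := by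
      intro ω hω
      exact ⟨pow_ne_zero 2 hω.2, hω⟩
    exact lt_of_lt_of_le (hn.lt_of_le' (by positivity)) (measure_mono this)
  calc (0:ℝ) < ∫ ω in ({ω | |Y ω| ≤ n} ∩ {ω | Y ω ≠ 0}), (Y ω) ^ 2 ∂P := hpos
  _ ≤ HH P Y ((n : ℝ) + 1) := setIntegral_mono_set (intOn hY _)
      (Filter.Eventually.of_forall fun ω => sq_nonneg _)
      (HasSubset.Subset.eventuallyLE hsub)

lemma feller (hY : Measurable Y)
    (h2 : Tendsto (fun x => HH P Y (2 * x) / HH P Y x) atTop (nhds 1))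
    (hne : P {ω | Y ω ≠ 0} ≠ 0) :
    Tendsto (fun x => x ^ 2 * TT P Y x / HH P Y x) atTop (nhds 0) := by
  obtain ⟨x₀, hx₀pos, hx₀⟩ := HH_pos hY hne
  have hHpos : ∀ x, x₀ ≤ x → 0 < HH P Y x := fun x hx => lt_of_lt_of_le hx₀ (HH_mono hY hx)
  refine tendsto_order.2 ⟨fun a ha => ?_, fun a ha => ?_⟩
  · filter_upwards with x
    exact lt_of_lt_of_le ha (div_nonneg (mul_nonneg (sq_nonneg _) (TT_nonneg _)) (HH_nonneg hY _))
  · -- a > 0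
    set δ : ℝ := min (a / 8) 1 with hδdef
    have hδpos : 0 < δ := lt_min (by linarith) one_pos
    have hδ1 : δ ≤ 1 := min_le_right _ _
    have hδa : δ ≤ a / 8 := min_le_left _ _
    have hev : ∀ᶠ x in atTop, HH P Y (2 * x) / HH P Y x < 1 + δ :=
      h2.eventually (eventually_lt_nhds (by linarith))
    obtain ⟨x₁', hx₁'⟩ := eventually_atTop.1 hev
    set x₁ : ℝ := max x₁' (max x₀ 1) with hx₁def
    have hx₁1 : (1:ℝ) ≤ x₁ := le_trans (le_max_right _ _) (le_max_right _ _)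
    have hx₁0 : x₀ ≤ x₁ := le_trans (le_max_left _ _) (le_max_right _ _)
    have hkey : ∀ y, x₁ ≤ y → HH P Y (2 * y) ≤ (1 + δ) * HH P Y y := by
      intro y hy
      have hp := hHpos y (le_trans hx₁0 hy)
      have := hx₁' y (le_trans (le_max_left _ _) hy)
      exact le_of_lt ((div_lt_iff₀ hp).1 this)
    have haux : ∀ (k : ℕ) (y : ℝ), x₁ ≤ y → HH P Y (2 ^ k * y) ≤ 2 ^ k * HH P Y y := by
      intro k
      induction k with
      | zero => intro y _; simp
      | succ k ih =>
        intro y hy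
        have hyk : x₁ ≤ 2 ^ k * y := le_trans hy
          (le_mul_of_one_le_left (by linarith) (one_le_pow₀ one_le_two))
        calc HH P Y (2 ^ (k+1) * y) = HH P Y (2 * (2 ^ k * y)) := by ring_nf
        _ ≤ (1 + δ) * HH P Y (2 ^ k * y) := hkey _ hyk
        _ ≤ 2 * (2 ^ k * HH P Y y) := by
            have h1 := ih y hy
            have h2 : (1 + δ) ≤ 2 := by linarith
            have h3 : (0:ℝ) ≤ HH P Y (2 ^ k * y) := HH_nonneg hY _
            nlinarith [HH_nonneg hY y (P := P)]
        _ = 2 ^ (k+1) * HH P Y y := by ring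
    have hpartial : ∀ (y : ℝ), x₁ ≤ y → ∀ N : ℕ,
        TT P Y y - TT P Y (2 ^ N * y) ≤ δ * HH P Y y / y ^ 2 * (2 - 2 * (1/2 : ℝ) ^ N) := by
      intro y hy
      have hy0 : (0:ℝ) < y := lt_of_lt_of_le one_pos (le_trans hx₁1 hy)
      intro N
      induction N with
      | zero => simp
      | succ N ih =>
        have hzk : (0:ℝ) < 2 ^ N * y := by positivity
        have hyk : x₁ ≤ 2 ^ N * y := le_trans hy
          (le_mul_of_one_le_left (le_of_lt hy0) (one_le_pow₀ one_le_two))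
        have hstep : TT P Y (2 ^ N * y) - TT P Y (2 ^ (N+1) * y)
            ≤ δ * HH P Y y / y ^ 2 * (1/2 : ℝ) ^ N := by
          have hab : (2:ℝ) ^ N * y ≤ 2 ^ (N+1) * y := by
            have hps : (2:ℝ) ^ (N+1) = 2 ^ N * 2 := pow_succ 2 N
            nlinarith [pow_pos (show (0:ℝ) < 2 by norm_num) N]
          have h1 := HH_diff_ge (P := P) hY (le_of_lt hzk) hab
          have h2 : HH P Y (2 ^ (N+1) * y) - HH P Y (2 ^ N * y) ≤ δ * (2 ^ N * HH P Y y) := by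
            have hk := hkey _ hyk
            have : HH P Y (2 ^ (N+1) * y) = HH P Y (2 * (2 ^ N * y)) := by ring_nf
            rw [this]
            have hik := haux N y hy
            nlinarith [HH_nonneg hY (2 ^ N * y) (P := P)]
          have h3 : (2 ^ N * y) ^ 2 * (TT P Y (2 ^ N * y) - TT P Y (2 ^ (N+1) * y))
              ≤ δ * (2 ^ N * HH P Y y) := le_trans h1 h2
          have h4 : (0:ℝ) < (2 ^ N * y) ^ 2 := by positivity
          rw [← le_div_iff₀' h4] at h3
          calc TT P Y (2 ^ N * y) - TT P Y (2 ^ (N+1) * y)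
              ≤ δ * (2 ^ N * HH P Y y) / (2 ^ N * y) ^ 2 := h3
          _ = δ * HH P Y y / y ^ 2 * (1/2 : ℝ) ^ N := by
              field_simp
              have h5 : (2:ℝ) ^ N * (1/2) ^ N = 1 := by rw [← mul_pow]; norm_num
              linear_combination (-HH P Y y) * h5
        calc TT P Y y - TT P Y (2 ^ (N+1) * y)
            = (TT P Y y - TT P Y (2 ^ N * y)) + (TT P Y (2 ^ N * y) - TT P Y (2 ^ (N+1) * y)) := by
              ring
        _ ≤ δ * HH P Y y / y ^ 2 * (2 - 2 * (1/2 : ℝ) ^ N) + δ * HH P Y y / y ^ 2 * (1/2 : ℝ) ^ N :=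
              add_le_add ih hstep
        _ = δ * HH P Y y / y ^ 2 * (2 - 2 * (1/2 : ℝ) ^ (N+1)) := by ring
    -- conclude : for y ≥ x₁, f y < a
    filter_upwards [eventually_ge_atTop x₁] with y hy
    have hy0 : (0:ℝ) < y := lt_of_lt_of_le one_pos (le_trans hx₁1 hy)
    have hHy := hHpos y (le_trans hx₁0 hy)
    have hlim : Tendsto (fun N : ℕ => TT P Y (2 ^ N * y)) atTop (nhds 0) := by
      apply (TT_tendsto hY).comp
      exact Tendsto.atTop_mul_const hy0 (tendsto_pow_atTop_atTop_of_one_lt one_lt_two)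
    have hTy : TT P Y y ≤ 2 * δ * HH P Y y / y ^ 2 := by
      have hbd : ∀ N : ℕ, TT P Y y ≤ TT P Y (2 ^ N * y) + 2 * δ * HH P Y y / y ^ 2 := by
        intro N
        have h1 := hpartial y hy N
        have h2 : δ * HH P Y y / y ^ 2 * (2 - 2 * (1/2 : ℝ) ^ N) ≤ 2 * δ * HH P Y y / y ^ 2 := by
          have hc : (0:ℝ) ≤ δ * HH P Y y / y ^ 2 := by positivity
          have hcn := mul_nonneg hc (pow_nonneg (by norm_num : (0:ℝ) ≤ 1/2) N)
          calc δ * HH P Y y / y ^ 2 * (2 - 2 * (1/2 : ℝ) ^ N)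
              = 2 * (δ * HH P Y y / y ^ 2) - 2 * (δ * HH P Y y / y ^ 2 * (1/2:ℝ) ^ N) := by ring
          _ ≤ 2 * (δ * HH P Y y / y ^ 2) := by linarith
          _ = 2 * δ * HH P Y y / y ^ 2 := by ring
        linarith
      have hlim2 : Tendsto (fun N : ℕ => TT P Y (2 ^ N * y) + 2 * δ * HH P Y y / y ^ 2) atTop
          (nhds (0 + 2 * δ * HH P Y y / y ^ 2)) := hlim.add tendsto_const_nhds
      have := ge_of_tendsto' hlim2 hbd
      linarith
    have hfy : y ^ 2 * TT P Y y / HH P Y y ≤ 2 * δ := by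
      rw [div_le_iff₀ hHy]
      have : y ^ 2 * TT P Y y ≤ y ^ 2 * (2 * δ * HH P Y y / y ^ 2) :=
        mul_le_mul_of_nonneg_left hTy (sq_nonneg _)
      calc y ^ 2 * TT P Y y ≤ y ^ 2 * (2 * δ * HH P Y y / y ^ 2) := this
      _ = 2 * δ * HH P Y y := by field_simp
    calc y ^ 2 * TT P Y y / HH P Y y ≤ 2 * δ := hfy
    _ ≤ a / 4 := by linarith
    _ < a := by linarith


lemma slowly_of_feller (hY : Measurable Y)
    (hu : Tendsto (fun x => x ^ 2 * TT P Y x / HH P Y x) atTop (nhds 0))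
    (hne : P {ω | Y ω ≠ 0} ≠ 0) :
    ∀ l > 0, Tendsto (fun x => HH P Y (l * x) / HH P Y x) atTop (nhds 1) := by
  obtain ⟨x₀, hx₀pos, hx₀⟩ := HH_pos hY hne
  have hHpos : ∀ x, x₀ ≤ x → 0 < HH P Y x := fun x hx => lt_of_lt_of_le hx₀ (HH_mono hY hx)
  have case1 : ∀ l : ℝ, 1 ≤ l → Tendsto (fun x => HH P Y (l * x) / HH P Y x) atTop (nhds 1) := by
    intro l hl
    have hupper : Tendsto (fun x => 1 + l ^ 2 * (x ^ 2 * TT P Y x / HH P Y x)) atTop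
        (nhds (1 + l ^ 2 * 0)) := (hu.const_mul (l ^ 2)).const_add 1
    rw [show (1:ℝ) + l ^ 2 * 0 = 1 by ring] at hupper
    apply tendsto_of_tendsto_of_tendsto_of_le_of_le' tendsto_const_nhds hupper
    · filter_upwards [eventually_ge_atTop x₀, eventually_ge_atTop (0:ℝ)] with x hx hx0
      have hH := hHpos x hx
      exact (one_le_div hH).2 (HH_mono hY (le_mul_of_one_le_left hx0 hl))
    · filter_upwards [eventually_ge_atTop x₀, eventually_ge_atTop (0:ℝ)] with x hx hx0
      have hH := hHpos x hx
      have hd := HH_diff_le (P := P) hY (le_mul_of_one_le_left hx0 hl)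
      rw [div_le_iff₀ hH]
      have hc : x ^ 2 * TT P Y x / HH P Y x * HH P Y x = x ^ 2 * TT P Y x :=
        div_mul_cancel₀ _ (ne_of_gt hH)
      have hexp : (1 + l ^ 2 * (x ^ 2 * TT P Y x / HH P Y x)) * HH P Y x
          = HH P Y x + l ^ 2 * (x ^ 2 * TT P Y x) := by
        field_simp
      rw [hexp]
      nlinarith [hd]
  intro l hl
  rcases le_or_gt 1 l with h1 | h1
  · exact case1 l h1
  · have hinv1 : (1:ℝ) ≤ l⁻¹ := by
      have h2 := inv_pos.mpr hl
      have h3 := mul_inv_cancel₀ (ne_of_gt hl)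
      nlinarith
    have hg := (case1 l⁻¹ hinv1).comp (Filter.Tendsto.const_mul_atTop hl tendsto_id)
    have heq : (fun x => HH P Y (l⁻¹ * (l * x)) / HH P Y (l * x))
        = fun x => HH P Y x / HH P Y (l * x) := by
      funext x
      rw [show l⁻¹ * (l * x) = x by field_simp]
    have hg2 : Tendsto (fun x => HH P Y x / HH P Y (l * x)) atTop (nhds 1) := by
      apply hg.congr
      intro x
      simp only [Function.comp_apply, id_eq]
      rw [show l⁻¹ * (l * x) = x by field_simp]
    have := hg2.inv₀ one_ne_zero
    simpa [inv_div] using this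


lemma copy_HH {X Xt : Ω → ℝ} (hX : Measurable X) (hXt : Measurable Xt)
    (hcopy : Measure.map Xt P = Measure.map X P) (x : ℝ) : HH P Xt x = HH P X x := by
  have h1 : ∀ (W : Ω → ℝ), Measurable W →
      HH P W x = ∫ t in {t : ℝ | |t| ≤ x}, t ^ 2 ∂(Measure.map W P) := by
    intro W hW
    rw [setIntegral_map (measurableSet_le measurable_abs measurable_const)
      ((continuous_pow 2).measurable.aestronglyMeasurable) hW.aemeasurable]
    rfl
  rw [h1 Xt hXt, h1 X hX, hcopy]

lemma copy_TT {X Xt : Ω → ℝ} (hX : Measurable X) (hXt : Measurable Xt)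
    (hcopy : Measure.map Xt P = Measure.map X P) (x : ℝ) : TT P Xt x = TT P X x := by
  have h1 : ∀ (W : Ω → ℝ), Measurable W →
      P {ω | x < |W ω|} = (Measure.map W P) {t : ℝ | x < |t|} := by
    intro W hW
    rw [Measure.map_apply hW (measurableSet_lt measurable_const measurable_abs)]
    rfl
  unfold TT
  rw [h1 Xt hXt, h1 X hX, hcopy]

lemma mix_bound {X Xt : Ω → ℝ} (hX : Measurable X) (hXt : Measurable Xt)
    (hcopy : Measure.map Xt P = Measure.map X P) (x : ℝ) :
    HH P (fun ω => X ω - Xt ω) x ≤ 4 * HH P X x + 2 * (x ^ 2 * TT P X x) := by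
  set Z : Ω → ℝ := fun ω => X ω - Xt ω with hZdef
  have hZ : Measurable Z := hX.sub hXt
  set S : Set Ω := {ω | |Z ω| ≤ x} with hSdef
  set A : Set Ω := {ω | |X ω| ≤ x} with hAdef
  set B : Set Ω := {ω | |Xt ω| ≤ x} with hBdef
  have hSm : MeasurableSet S := mSle hZ x
  have hAm : MeasurableSet A := mSle hX x
  have hBm : MeasurableSet B := mSle hXt x
  have hsplit : S = (S ∩ (A ∩ B)) ∪ (S \ (A ∩ B)) := (Set.inter_union_diff S (A ∩ B)).symm
  have hdisj : Disjoint (S ∩ (A ∩ B)) (S \ (A ∩ B)) :=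
    Set.disjoint_of_subset_left inter_subset_right Set.disjoint_sdiff_right
  have hint1 : IntegrableOn (fun ω => (Z ω) ^ 2) (S ∩ (A ∩ B)) P :=
    (intOn hZ x).mono_set inter_subset_left
  have hint2 : IntegrableOn (fun ω => (Z ω) ^ 2) (S \ (A ∩ B)) P :=
    (intOn hZ x).mono_set Set.diff_subset
  have heq : HH P Z x = (∫ ω in S ∩ (A ∩ B), (Z ω) ^ 2 ∂P) + ∫ ω in S \ (A ∩ B), (Z ω) ^ 2 ∂P := by
    unfold HH
    nth_rewrite 1 [show {ω | |Z ω| ≤ x} = (S ∩ (A ∩ B)) ∪ (S \ (A ∩ B)) from hsplit]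
    exact setIntegral_union hdisj (hSm.diff (hAm.inter hBm)) hint1 hint2
  have hpart1 : (∫ ω in S ∩ (A ∩ B), (Z ω) ^ 2 ∂P) ≤ 4 * HH P X x := by
    have hb1 : (∫ ω in S ∩ (A ∩ B), (Z ω) ^ 2 ∂P)
        ≤ ∫ ω in S ∩ (A ∩ B), 2 * (X ω) ^ 2 + 2 * (Xt ω) ^ 2 ∂P := by
      apply setIntegral_mono_on hint1 _ (hSm.inter (hAm.inter hBm))
      · intro ω _
        show (X ω - Xt ω) ^ 2 ≤ 2 * (X ω) ^ 2 + 2 * (Xt ω) ^ 2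
        nlinarith [sq_nonneg (X ω + Xt ω)]
      · apply Integrable.add
        · exact (((intOn hX x).mono_set (inter_subset_right.trans inter_subset_left)).const_mul 2)
        · exact (((intOn hXt x).mono_set (inter_subset_right.trans inter_subset_right)).const_mul 2)
    have hb2 : (∫ ω in S ∩ (A ∩ B), 2 * (X ω) ^ 2 + 2 * (Xt ω) ^ 2 ∂P)
        = 2 * (∫ ω in S ∩ (A ∩ B), (X ω) ^ 2 ∂P) + 2 * ∫ ω in S ∩ (A ∩ B), (Xt ω) ^ 2 ∂P := by
      rw [integral_add (((intOn hX x).mono_set (inter_subset_right.trans inter_subset_left)).const_mul 2)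
        (((intOn hXt x).mono_set (inter_subset_right.trans inter_subset_right)).const_mul 2),
        integral_const_mul, integral_const_mul]
    have hb3 : (∫ ω in S ∩ (A ∩ B), (X ω) ^ 2 ∂P) ≤ HH P X x :=
      setIntegral_mono_set (intOn hX x) (Filter.Eventually.of_forall fun ω => sq_nonneg _)
        (HasSubset.Subset.eventuallyLE (inter_subset_right.trans inter_subset_left))
    have hb4 : (∫ ω in S ∩ (A ∩ B), (Xt ω) ^ 2 ∂P) ≤ HH P Xt x :=
      setIntegral_mono_set (intOn hXt x) (Filter.Eventually.of_forall fun ω => sq_nonneg _)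
        (HasSubset.Subset.eventuallyLE (inter_subset_right.trans inter_subset_right))
    rw [copy_HH hX hXt hcopy] at hb4
    linarith
  have hpart2 : (∫ ω in S \ (A ∩ B), (Z ω) ^ 2 ∂P) ≤ 2 * (x ^ 2 * TT P X x) := by
    have hb1 : (∫ ω in S \ (A ∩ B), (Z ω) ^ 2 ∂P) ≤ x ^ 2 * (P (S \ (A ∩ B))).toReal := by
      have := setIntegral_mono_on hint2
        (integrableOn_const (measure_ne_top P _))
        (hSm.diff (hAm.inter hBm)) (f := fun ω => (Z ω)^2) (g := fun _ => x ^ 2) ?_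
      · rw [setIntegral_const, smul_eq_mul, mul_comm] at this
        exact this
      · intro ω hω
        have h1 : |Z ω| ≤ x := hω.1
        calc (Z ω) ^ 2 = |Z ω| ^ 2 := (sq_abs _).symm
        _ ≤ x ^ 2 := pow_le_pow_left₀ (abs_nonneg _) h1 2
    have hb2 : (P (S \ (A ∩ B))).toReal ≤ TT P X x + TT P Xt x := by
      have hsub : S \ (A ∩ B) ⊆ {ω | x < |X ω|} ∪ {ω | x < |Xt ω|} := by
        rintro ω ⟨_, h2⟩
        simp only [mem_inter_iff, mem_setOf_eq, not_and_or] at h2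
        rcases h2 with h2 | h2
        · exact Or.inl (not_le.mp (show ¬ |X ω| ≤ x from h2))
        · exact Or.inr (not_le.mp (show ¬ |Xt ω| ≤ x from h2))
      calc (P (S \ (A ∩ B))).toReal
          ≤ (P ({ω | x < |X ω|} ∪ {ω | x < |Xt ω|})).toReal :=
            ENNReal.toReal_mono (measure_ne_top P _) (measure_mono hsub)
      _ ≤ (P {ω | x < |X ω|} + P {ω | x < |Xt ω|}).toReal :=
            ENNReal.toReal_mono (by finiteness) (measure_union_le _ _)
      _ = TT P X x + TT P Xt x := ENNReal.toReal_add (measure_ne_top P _) (measure_ne_top P _)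
    rw [copy_TT hX hXt hcopy] at hb2
    have hx2 : (0:ℝ) ≤ x ^ 2 := sq_nonneg x
    calc (∫ ω in S \ (A ∩ B), (Z ω) ^ 2 ∂P) ≤ x ^ 2 * (P (S \ (A ∩ B))).toReal := hb1
    _ ≤ x ^ 2 * (TT P X x + TT P X x) := mul_le_mul_of_nonneg_left hb2 hx2
    _ = 2 * (x ^ 2 * TT P X x) := by ring
  calc HH P (fun ω => X ω - Xt ω) x = HH P Z x := rfl
  _ = _ := heq
  _ ≤ 4 * HH P X x + 2 * (x ^ 2 * TT P X x) := add_le_add hpart1 hpart2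

end Stmt8Aux

theorem stmt8 (P : Measure Ω) [IsProbabilityMeasure P] (X Xt : Ω → ℝ)
    (hX : Measurable X) (hXt : Measurable Xt) (hint : Integrable X P)
    (hcopy : Measure.map Xt P = Measure.map X P) (hindep : IndepFun X Xt P)
    (hslow : SlowlyVarying fun x =>
      ∫ ω in {ω | |X ω - Xt ω| ≤ x}, (X ω - Xt ω) ^ 2 ∂P) :
    SlowlyVarying fun x => ∫ ω in {ω | |X ω| ≤ x}, (X ω) ^ 2 ∂P := by
  classical
  set Z : Ω → ℝ := fun ω => X ω - Xt ω with hZdef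
  have hZ : Measurable Z := hX.sub hXt
  by_cases h0 : P {ω | X ω - Xt ω ≠ 0} = 0
  · exfalso
    have hZ0 : ∀ x : ℝ, (∫ ω in {ω | |X ω - Xt ω| ≤ x}, (X ω - Xt ω) ^ 2 ∂P) = 0 := by
      intro x
      have hae : (fun ω => (X ω - Xt ω) ^ 2) =ᵐ[P] (fun _ => (0:ℝ)) := by
        have h1 : ∀ᵐ ω ∂P, X ω - Xt ω = 0 := by
          rw [ae_iff]
          simpa using h0
        filter_upwards [h1] with ω hω
        simp [hω]
      calc (∫ ω in {ω | |X ω - Xt ω| ≤ x}, (X ω - Xt ω) ^ 2 ∂P)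
          = ∫ _ω in {ω | |X ω - Xt ω| ≤ x}, (0:ℝ) ∂P :=
            integral_congr_ae (ae_restrict_of_ae hae)
      _ = 0 := by simp
    have h2 := hslow 2 two_pos
    simp only [hZ0] at h2
    have h3 : Tendsto (fun _ : ℝ => (0:ℝ)) atTop (nhds 1) := by simpa using h2
    exact absurd (tendsto_nhds_unique h3 tendsto_const_nhds) one_ne_zero
  · have hneZ : P {ω | Z ω ≠ 0} ≠ 0 := h0
    have hneX : P {ω | X ω ≠ 0} ≠ 0 := by
      intro hX0
      apply h0
      have hXt0 : P {ω | Xt ω ≠ 0} = 0 := by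
        have e1 : P {ω | Xt ω ≠ 0} = (Measure.map Xt P) {t : ℝ | t ≠ 0} := by
          rw [Measure.map_apply (s := {t : ℝ | t ≠ 0}) hXt ((measurableSet_singleton (0:ℝ)).compl)]
          rfl
        have e2 : P {ω | X ω ≠ 0} = (Measure.map X P) {t : ℝ | t ≠ 0} := by
          rw [Measure.map_apply (s := {t : ℝ | t ≠ 0}) hX ((measurableSet_singleton (0:ℝ)).compl)]
          rfl
        rw [e1, hcopy, ← e2]
        exact hX0
      have hsub : {ω | X ω - Xt ω ≠ 0} ⊆ {ω | X ω ≠ 0} ∪ {ω | Xt ω ≠ 0} := by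
        intro ω hω
        by_contra hc
        simp only [Set.mem_union, Set.mem_setOf_eq, not_or, not_not] at hc
        apply hω
        show X ω - Xt ω = 0
        rw [hc.1, hc.2]
        ring
      exact measure_mono_null hsub (measure_union_null hX0 hXt0)
    have hfelZ : Tendsto (fun x => x ^ 2 * Stmt8Aux.TT P Z x / Stmt8Aux.HH P Z x) atTop (nhds 0) := by
      apply Stmt8Aux.feller hZ _ hneZ
      exact hslow 2 two_pos
    obtain ⟨a0, ha0⟩ := eventually_atTop.1 ((Stmt8Aux.TT_tendsto (P := P) hXt).eventually
      (eventually_lt_nhds (by norm_num : (0:ℝ) < 1/2)))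
    set a' : ℝ := max a0 0 with ha'def
    have ha'0 : (0:ℝ) ≤ a' := le_max_right _ _
    have hhalf : Stmt8Aux.TT P Xt a' < 1/2 := ha0 a' (le_max_left _ _)
    have hTXle : ∀ x : ℝ, Stmt8Aux.TT P X x ≤ 2 * Stmt8Aux.TT P Z (x - a') := by
      intro x
      have hsub : {ω | x < |X ω|} ∩ {ω | |Xt ω| ≤ a'} ⊆ {ω | x - a' < |Z ω|} := by
        rintro ω ⟨h1, h2⟩
        have h3 : |X ω| - |Xt ω| ≤ |X ω - Xt ω| := abs_sub_abs_le_abs_sub _ _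
        have h1' : x < |X ω| := h1
        have h2' : |Xt ω| ≤ a' := h2
        show x - a' < |X ω - Xt ω|
        linarith
      have hmul' : P ({ω | x < |X ω|} ∩ {ω | |Xt ω| ≤ a'})
          = P {ω | x < |X ω|} * P {ω | |Xt ω| ≤ a'} :=
        hindep.measure_inter_preimage_eq_mul {t : ℝ | x < |t|} {t : ℝ | |t| ≤ a'}
          (measurableSet_lt measurable_const measurable_abs)
          (measurableSet_le measurable_abs measurable_const)
      have hr : Stmt8Aux.TT P X x * (P {ω | |Xt ω| ≤ a'}).toReal ≤ Stmt8Aux.TT P Z (x - a') := by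
        unfold Stmt8Aux.TT
        rw [← ENNReal.toReal_mul, ← hmul']
        exact ENNReal.toReal_mono (measure_ne_top P _) (measure_mono hsub)
      have hP2 : (1:ℝ)/2 ≤ (P {ω | |Xt ω| ≤ a'}).toReal := by
        have hcm : {ω | |Xt ω| ≤ a'} = {ω | a' < |Xt ω|}ᶜ := by
          ext ω; simp [not_lt]
        rw [hcm, measure_compl (Stmt8Aux.mSgt hXt a') (measure_ne_top P _), measure_univ,
          ENNReal.toReal_sub_of_le prob_le_one (by norm_num)]
        simp only [ENNReal.toReal_one]
        have h4 : (P {ω | a' < |Xt ω|}).toReal < 1/2 := hhalf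
        linarith
      have hTnn : (0:ℝ) ≤ Stmt8Aux.TT P X x := Stmt8Aux.TT_nonneg x
      have hPnn : (0:ℝ) ≤ (P {ω | |Xt ω| ≤ a'}).toReal := ENNReal.toReal_nonneg
      nlinarith
    obtain ⟨xX, hxXpos, hxX⟩ := Stmt8Aux.HH_pos hX hneX
    obtain ⟨xZ, hxZpos, hxZ⟩ := Stmt8Aux.HH_pos hZ hneZ
    have hu : Tendsto (fun x => x ^ 2 * Stmt8Aux.TT P X x / Stmt8Aux.HH P X x) atTop (nhds 0) := by
      refine tendsto_order.2 ⟨fun b hb => ?_, fun b hb => ?_⟩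
      · filter_upwards with x
        exact lt_of_lt_of_le hb (div_nonneg (mul_nonneg (sq_nonneg _) (Stmt8Aux.TT_nonneg _))
          (Stmt8Aux.HH_nonneg hX _))
      · set η : ℝ := min (1/32) (b/128) with hηdef
        have hηpos : 0 < η := lt_min (by norm_num) (by linarith)
        obtain ⟨y₀, hy₀⟩ := eventually_atTop.1 (hfelZ.eventually (eventually_lt_nhds hηpos))
        filter_upwards [eventually_ge_atTop (2*y₀), eventually_ge_atTop (2*xZ),
          eventually_ge_atTop xX, eventually_ge_atTop (2*a'), eventually_ge_atTop 1]
          with x hx1 hx2 hx3 hx4 hx5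
        have hx0 : (0:ℝ) < x := lt_of_lt_of_le one_pos hx5
        have hHX : 0 < Stmt8Aux.HH P X x := lt_of_lt_of_le hxX (Stmt8Aux.HH_mono hX hx3)
        have hHZhalf : 0 < Stmt8Aux.HH P Z (x/2) :=
          lt_of_lt_of_le hxZ (Stmt8Aux.HH_mono hZ (by linarith))
        set u : ℝ := (x/2) ^ 2 * Stmt8Aux.TT P Z (x/2) / Stmt8Aux.HH P Z (x/2) with hudef
        have huZ : u < η := hy₀ (x/2) (by linarith)
        have hun : 0 ≤ u := div_nonneg (mul_nonneg (sq_nonneg _) (Stmt8Aux.TT_nonneg _))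
          (Stmt8Aux.HH_nonneg hZ _)
        have hu_eq : (x/2) ^ 2 * Stmt8Aux.TT P Z (x/2) = u * Stmt8Aux.HH P Z (x/2) := by
          rw [hudef]
          field_simp
        have hη32 : u < 1/32 := lt_of_lt_of_le huZ (min_le_left _ _)
        have hη128 : u ≤ b/128 := le_of_lt (lt_of_lt_of_le huZ (min_le_right _ _))
        clear_value u
        clear hudef huZ
        have step1 : x ^ 2 * Stmt8Aux.TT P X x ≤ 2 * (x ^ 2 * Stmt8Aux.TT P Z (x - a')) := by
          have h5 := hTXle x
          have h6 := mul_le_mul_of_nonneg_left h5 (sq_nonneg x)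
          linarith
        have step2 : Stmt8Aux.TT P Z (x - a') ≤ Stmt8Aux.TT P Z (x/2) :=
          Stmt8Aux.TT_anti (by linarith)
        have step4 : x ^ 2 * Stmt8Aux.TT P X x ≤ 8 * (u * Stmt8Aux.HH P Z (x/2)) := by
          calc x ^ 2 * Stmt8Aux.TT P X x ≤ 2 * (x ^ 2 * Stmt8Aux.TT P Z (x - a')) := step1
          _ ≤ 2 * (x ^ 2 * Stmt8Aux.TT P Z (x/2)) := by
              have h6 := mul_le_mul_of_nonneg_left step2 (sq_nonneg x)
              linarith
          _ = 8 * ((x/2) ^ 2 * Stmt8Aux.TT P Z (x/2)) := by ring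
          _ = 8 * (u * Stmt8Aux.HH P Z (x/2)) := by rw [hu_eq]
        have step5 : Stmt8Aux.HH P Z (x/2) ≤ Stmt8Aux.HH P Z x :=
          Stmt8Aux.HH_mono hZ (by linarith)
        have step6 : Stmt8Aux.HH P Z x
            ≤ 4 * Stmt8Aux.HH P X x + 2 * (x ^ 2 * Stmt8Aux.TT P X x) :=
          Stmt8Aux.mix_bound hX hXt hcopy x
        have step7 : x ^ 2 * Stmt8Aux.TT P X x
            ≤ 8 * u * (4 * Stmt8Aux.HH P X x + 2 * (x ^ 2 * Stmt8Aux.TT P X x)) := by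
          have h6 := mul_le_mul_of_nonneg_left step5 hun
          have h7 := mul_le_mul_of_nonneg_left step6 hun
          linarith
        have htnn : (0:ℝ) ≤ x ^ 2 * Stmt8Aux.TT P X x :=
          mul_nonneg (sq_nonneg _) (Stmt8Aux.TT_nonneg _)
        have h16 : 16 * u * (x ^ 2 * Stmt8Aux.TT P X x) ≤ (1/2) * (x ^ 2 * Stmt8Aux.TT P X x) := by
          linarith [mul_nonneg (by linarith : (0:ℝ) ≤ 1/2 - 16*u) htnn]
        have h64 : x ^ 2 * Stmt8Aux.TT P X x ≤ 64 * u * Stmt8Aux.HH P X x := by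
          linarith [step7, h16]
        have hfin : 64 * u * Stmt8Aux.HH P X x ≤ (b/2) * Stmt8Aux.HH P X x := by
          linarith [mul_le_mul_of_nonneg_right hη128 (le_of_lt hHX)]
        rw [div_lt_iff₀ hHX]
        linarith [h64, hfin, mul_pos hb hHX]
    intro l hl
    exact Stmt8Aux.slowly_of_feller hX hu hneX l hl
end

section
/- Let (c_n) be a positive sequence with ((n−1)/c_{n−1}²)·(c_n² − c_{n−1}²) ≥ c > 1 for all n > 1, and let Z be a real random variable with n·P[|Z| > c_n] → 0. Then (n/c_n²)·E[Z²·1_{|Z| ≤ c_n}] → 0 as n → ∞. -/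
open MeasureTheory Filter Set ProbabilityTheory

variable {Ω : Type*} [MeasurableSpace Ω]

section AuxStmt11

open MeasureTheory Filter Set

private lemma aux_growth11 (c : ℕ → ℝ) (hc : ∀ n, 0 < c n) (cc : ℝ) (hcc : 1 < cc)
    (hstep : ∀ k : ℕ, 1 ≤ k → cc * (c k) ^ 2 / k ≤ (c (k + 1)) ^ 2 - (c k) ^ 2) :
    Tendsto (fun n : ℕ => (n : ℝ) / (c n) ^ 2) atTop (nhds 0) := by
  set r : ℕ → ℝ := fun n => (c n) ^ 2 / n with hr
  have hrec : ∀ n : ℕ, 1 ≤ n → r n * (1 + (cc - 1) / ((n : ℝ) + 1)) ≤ r (n + 1) := by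
    intro n hn
    have hn0 : (0 : ℝ) < n := by exact_mod_cast hn
    have hn1 : (0 : ℝ) < (n : ℝ) + 1 := by linarith
    have hx : (0 : ℝ) < (c n) ^ 2 := pow_pos (hc n) 2
    have h1 : cc * (c n) ^ 2 ≤ ((c (n + 1)) ^ 2 - (c n) ^ 2) * n := by
      have h := hstep n hn
      rwa [div_le_iff₀ hn0] at h
    have e1 : r n * (1 + (cc - 1) / ((n : ℝ) + 1))
        = ((c n) ^ 2 * ((n : ℝ) + cc)) / ((n : ℝ) * ((n : ℝ) + 1)) := by
      simp only [hr]
      field_simp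
      ring
    have e2 : r (n + 1) = ((c (n + 1)) ^ 2 * (n : ℝ)) / ((n : ℝ) * ((n : ℝ) + 1)) := by
      simp only [hr]
      push_cast
      field_simp
    rw [e1, e2]
    gcongr ?_ / _
    nlinarith [h1]
  set S : ℕ → ℝ := fun n => ∑ k ∈ Finset.range n, (cc - 1) / ((k : ℝ) + 2) with hS
  have hS0 : ∀ n, 0 ≤ S n := by
    intro n
    apply Finset.sum_nonneg
    intro k _
    exact div_nonneg (by linarith) (by positivity)
  have hr1 : 0 < r 1 := by
    have h : r 1 = (c 1) ^ 2 / 1 := by norm_num [hr]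
    rw [h]
    norm_num
    exact pow_pos (hc 1) 2
  have claim2 : ∀ n : ℕ, r 1 * (1 + S n) ≤ r (n + 1) := by
    intro n
    induction n with
    | zero => simp [hS]
    | succ n ih =>
      have h2 := hrec (n + 1) (by omega)
      push_cast at h2
      have hSstep : S (n + 1) = S n + (cc - 1) / ((n : ℝ) + 2) := by
        simp only [hS, Finset.sum_range_succ]
      have hε : 0 ≤ (cc - 1) / ((n : ℝ) + 2) := div_nonneg (by linarith) (by positivity)
      have h3 : r 1 * (1 + S n) * (1 + (cc - 1) / ((n : ℝ) + 1 + 1))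
          ≤ r (n + 1) * (1 + (cc - 1) / ((n : ℝ) + 1 + 1)) := by
        apply mul_le_mul_of_nonneg_right ih
        have h5 : 0 ≤ (cc - 1) / ((n : ℝ) + 1 + 1) := div_nonneg (by linarith) (by positivity)
        linarith
      have h4 : ((n : ℝ) + 1 + 1) = (n : ℝ) + 2 := by ring
      rw [hSstep]
      rw [h4] at h3 h2
      nlinarith [mul_nonneg (mul_nonneg hr1.le (hS0 n)) hε]
  have hT := Real.tendsto_sum_range_one_div_nat_succ_atTop
  have hShift : Tendsto (fun n : ℕ => ∑ i ∈ Finset.range (n + 1), (1 / ((i : ℝ) + 1)))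
      atTop atTop := hT.comp (tendsto_add_atTop_nat 1)
  have hSeq : ∀ n : ℕ, S n = (cc - 1) * ((∑ i ∈ Finset.range (n + 1), (1 / ((i : ℝ) + 1))) - 1) := by
    intro n
    have h5 : ∑ i ∈ Finset.range (n + 1), (1 / ((i : ℝ) + 1))
        = (∑ i ∈ Finset.range n, (1 / ((i : ℝ) + 2))) + 1 := by
      rw [Finset.sum_range_succ']
      push_cast
      norm_num
      apply Finset.sum_congr rfl
      intro x _
      ring_nf
    rw [h5]
    simp only [hS, add_sub_cancel_right, Finset.mul_sum]
    apply Finset.sum_congr rfl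
    intro k _
    ring
  have hStop : Tendsto S atTop atTop := by
    have h6 : Tendsto (fun n : ℕ => ((∑ i ∈ Finset.range (n + 1), (1 / ((i : ℝ) + 1))) - 1))
        atTop atTop := tendsto_atTop_add_const_right _ (-1) hShift
    have h7 := h6.const_mul_atTop (show (0:ℝ) < cc - 1 by linarith)
    exact h7.congr (fun n => (hSeq n).symm)
  have h8 : Tendsto (fun n : ℕ => r 1 * (1 + S n)) atTop atTop :=
    (tendsto_atTop_add_const_left _ 1 hStop).const_mul_atTop hr1
  have h9 : Tendsto (fun n : ℕ => r (n + 1)) atTop atTop := tendsto_atTop_mono claim2 h8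
  have hrtop : Tendsto r atTop atTop := (tendsto_add_atTop_iff_nat 1).mp h9
  have heq : (fun n : ℕ => (n : ℝ) / (c n) ^ 2) = fun n => (r n)⁻¹ := by
    funext n
    simp only [hr]
    rw [inv_div]
  rw [heq]
  exact hrtop.inv_tendsto_atTop

private lemma aux_sumbound11 (c : ℕ → ℝ) (hc : ∀ n, 0 < c n) (cc : ℝ) (hcc : 1 < cc)
    (hstep : ∀ k : ℕ, 1 ≤ k → cc * (c k) ^ 2 / k ≤ (c (k + 1)) ^ 2 - (c k) ^ 2) :
    ∀ m : ℕ, 1 ≤ m →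
      ∑ j ∈ Finset.Icc 1 m, ((c (j + 1)) ^ 2 - (c j) ^ 2) / j
        ≤ 2 * cc / (cc - 1) * (c (m + 1)) ^ 2 / ((m : ℝ) + 1) := by
  have hcc0 : (0:ℝ) < cc - 1 := by linarith
  set C := 2 * cc / (cc - 1) with hC
  have hC2 : 2 < C := by
    rw [hC, lt_div_iff₀ hcc0]
    linarith
  have hCeq : C * (cc - 1) = 2 * cc := by
    rw [hC]
    field_simp
  intro m hm
  induction m, hm using Nat.le_induction with
  | base =>
    have h1 : cc * (c 1) ^ 2 / (1:ℕ) ≤ (c 2) ^ 2 - (c 1) ^ 2 := hstep 1 le_rfl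
    rw [Finset.Icc_self, Finset.sum_singleton]
    push_cast at h1 ⊢
    have hx1 : (0:ℝ) < (c 1) ^ 2 := pow_pos (hc 1) 2
    have hx2 : (0:ℝ) < (c 2) ^ 2 := pow_pos (hc 2) 2
    rw [div_le_div_iff₀ (by norm_num) (by norm_num)]
    nlinarith
  | succ m hm ih =>
    rw [Finset.sum_Icc_succ_top (by omega : 1 ≤ m + 1)]
    have hx : (0:ℝ) < (c (m+1))^2 := pow_pos (hc (m+1)) 2
    have hy : (0:ℝ) < (c (m+2))^2 := pow_pos (hc (m+2)) 2
    have htm : (1:ℝ) ≤ (m:ℝ) := by exact_mod_cast hm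
    have h1 : cc * (c (m+1))^2 ≤ ((c (m+2))^2 - (c (m+1))^2) * ((m:ℝ)+1) := by
      have h := hstep (m+1) (by omega)
      push_cast at h
      rwa [div_le_iff₀ (by linarith : (0:ℝ) < (m:ℝ)+1)] at h
    have hlin : C * cc - C = 2 * cc := by linear_combination hCeq
    have hxy : (c (m+1))^2 ≤ (c (m+2))^2 := by nlinarith
    have key : C * (c (m+1))^2 / ((m:ℝ)+1) + ((c (m+2))^2 - (c (m+1))^2) / ((m:ℝ)+1)
        ≤ C * (c (m+2))^2 / ((m:ℝ)+2) := by
      rw [← add_div, div_le_div_iff₀ (by linarith) (by linarith)]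
      have e : C * (c (m+2))^2 * ((m:ℝ)+1)
          - (C * (c (m+1))^2 + ((c (m+2))^2 - (c (m+1))^2)) * ((m:ℝ)+2)
          = ((C - 3/2) * (((c (m+2))^2 - (c (m+1))^2) * ((m:ℝ)+1))
              - (C - 3/2) * (cc * (c (m+1))^2))
            + (1/2) * (((c (m+2))^2 - (c (m+1))^2) * (((m:ℝ)+1) - 2))
            + ((c (m+1))^2 * (C * cc - C - (3/2) * cc)) := by ring
      have f1 : 0 ≤ (C - 3/2) * (((c (m+2))^2 - (c (m+1))^2) * ((m:ℝ)+1))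
          - (C - 3/2) * (cc * (c (m+1))^2) := by
        have := mul_le_mul_of_nonneg_left h1 (by linarith : (0:ℝ) ≤ C - 3/2)
        linarith
      have f2 : 0 ≤ (1/2) * (((c (m+2))^2 - (c (m+1))^2) * (((m:ℝ)+1) - 2)) := by
        have := mul_nonneg (by linarith : (0:ℝ) ≤ (c (m+2))^2 - (c (m+1))^2)
          (by linarith : (0:ℝ) ≤ ((m:ℝ)+1) - 2)
        linarith
      have f3 : 0 ≤ (c (m+1))^2 * (C * cc - C - (3/2) * cc) := by
        apply mul_nonneg hx.le
        rw [hlin]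
        linarith
      linarith [e, f1, f2, f3]
    have hcast1 : ((m+1 : ℕ) : ℝ) = (m:ℝ) + 1 := by push_cast; ring
    have hcast2 : ((m+1 : ℕ) : ℝ) + 1 = (m:ℝ) + 2 := by push_cast; ring
    calc (∑ j ∈ Finset.Icc 1 m, ((c (j + 1)) ^ 2 - (c j) ^ 2) / j)
          + ((c (m+1+1))^2 - (c (m+1))^2) / ((m+1 : ℕ) : ℝ)
        ≤ C * (c (m+1))^2 / ((m:ℝ)+1) + ((c (m+2))^2 - (c (m+1))^2) / ((m:ℝ)+1) := by
          rw [hcast1]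
          exact add_le_add ih le_rfl
      _ ≤ C * (c (m+2))^2 / ((m:ℝ)+2) := key
      _ = C * (c (m+1+1))^2 / (((m+1:ℕ) : ℝ) + 1) := by rw [hcast2]

private lemma aux_abel11 {Ω : Type*} [MeasurableSpace Ω] (P : Measure Ω) [IsProbabilityMeasure P]
    (Z : Ω → ℝ) (hZ : Measurable Z) (c : ℕ → ℝ)
    (hmono : ∀ k : ℕ, 1 ≤ k → c k ≤ c (k + 1)) :
    ∀ m : ℕ, (∫ ω in {ω | |Z ω| ≤ c (m + 1)}, (Z ω) ^ 2 ∂P)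
        + (c (m + 1)) ^ 2 * (P {ω | c (m + 1) < |Z ω|}).toReal
      ≤ (c 1) ^ 2 + ∑ j ∈ Finset.Icc 1 m, ((c (j + 1)) ^ 2 - (c j) ^ 2)
          * (P {ω | c j < |Z ω|}).toReal := by
  have hZ2m : Measurable fun ω => (Z ω) ^ 2 := (hZ.pow_const 2)
  have hmeasLe : ∀ a : ℝ, MeasurableSet {ω | |Z ω| ≤ a} :=
    fun a => measurableSet_le hZ.abs measurable_const
  have hmeasLt : ∀ a : ℝ, MeasurableSet {ω | a < |Z ω|} :=
    fun a => measurableSet_lt measurable_const hZ.abs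
  have hIntOn : ∀ (b : ℝ) (s : Set Ω), MeasurableSet s → (∀ ω ∈ s, |Z ω| ≤ b) →
      IntegrableOn (fun ω => (Z ω) ^ 2) s P := by
    intro b s hs hb
    apply Measure.integrableOn_of_bounded (M := b ^ 2) (measure_ne_top P s)
      hZ2m.aestronglyMeasurable
    filter_upwards [ae_restrict_mem hs] with ω hω
    rw [Real.norm_eq_abs, abs_of_nonneg (sq_nonneg _), ← sq_abs]
    exact pow_le_pow_left₀ (abs_nonneg _) (hb ω hω) 2
  have hIb : ∀ (b : ℝ) (s : Set Ω), MeasurableSet s → (∀ ω ∈ s, |Z ω| ≤ b) →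
      (∫ ω in s, (Z ω) ^ 2 ∂P) ≤ b ^ 2 * (P s).toReal := by
    intro b s hs hb
    calc (∫ ω in s, (Z ω) ^ 2 ∂P) ≤ ∫ _ω in s, b ^ 2 ∂P := by
          apply setIntegral_mono_on (hIntOn b s hs hb)
            (integrableOn_const (measure_ne_top P s)) hs
          intro ω hω
          rw [← sq_abs]
          exact pow_le_pow_left₀ (abs_nonneg _) (hb ω hω) 2
      _ = b ^ 2 * (P s).toReal := by rw [setIntegral_const, smul_eq_mul, measureReal_def]; ring
  intro m
  induction m with
  | zero =>
    have h1 : (∫ ω in {ω | |Z ω| ≤ c 1}, (Z ω) ^ 2 ∂P)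
        ≤ (c 1) ^ 2 * (P {ω | |Z ω| ≤ c 1}).toReal :=
      hIb (c 1) _ (hmeasLe _) (fun ω h => h)
    have hcompl : {ω | c 1 < |Z ω|} = {ω | |Z ω| ≤ c 1}ᶜ := by
      ext ω; simp [not_le]
    have h2 : (P {ω | |Z ω| ≤ c 1}).toReal + (P {ω | c 1 < |Z ω|}).toReal = 1 := by
      rw [hcompl, ← ENNReal.toReal_add (measure_ne_top P _) (measure_ne_top P _),
        measure_add_measure_compl (hmeasLe (c 1)), measure_univ, ENNReal.toReal_one]
    have hpA : (P {ω | |Z ω| ≤ c 1}).toReal = 1 - (P {ω | c 1 < |Z ω|}).toReal := by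
      linarith
    rw [hpA] at h1
    have hIcc : Finset.Icc 1 0 = (∅ : Finset ℕ) := by decide
    rw [Nat.zero_add, hIcc, Finset.sum_empty, add_zero]
    nlinarith [h1, sq_nonneg (c 1)]
  | succ m ih =>
    set a := c (m + 1) with ha
    set b := c (m + 1 + 1) with hb
    have hab : a ≤ b := hmono (m + 1) (by omega)
    set E : Set Ω := {ω | a < |Z ω|} ∩ {ω | |Z ω| ≤ b} with hE
    have hmeasE : MeasurableSet E := (hmeasLt a).inter (hmeasLe b)
    have hA' : {ω | |Z ω| ≤ b} = {ω | |Z ω| ≤ a} ∪ E := by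
      ext ω
      simp only [hE, mem_union, mem_setOf_eq, mem_inter_iff]
      constructor
      · intro h
        by_cases h2 : |Z ω| ≤ a
        · exact Or.inl h2
        · exact Or.inr ⟨lt_of_not_ge h2, h⟩
      · rintro (h | ⟨_, h2⟩)
        · exact h.trans hab
        · exact h2
    have hdisj : Disjoint {ω | |Z ω| ≤ a} E := by
      rw [Set.disjoint_left]
      intro ω hω hω2
      have h1 : a < |Z ω| := hω2.1
      have h2 : |Z ω| ≤ a := hω
      linarith
    have hB : {ω | a < |Z ω|} = E ∪ {ω | b < |Z ω|} := by
      ext ω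
      simp only [hE, mem_union, mem_setOf_eq, mem_inter_iff]
      constructor
      · intro h
        by_cases h2 : |Z ω| ≤ b
        · exact Or.inl ⟨h, h2⟩
        · exact Or.inr (lt_of_not_ge h2)
      · rintro (⟨h, _⟩ | h)
        · exact h
        · exact lt_of_le_of_lt hab h
    have hdisj2 : Disjoint E {ω | b < |Z ω|} := by
      rw [Set.disjoint_left]
      intro ω hω hω2
      have h1 : |Z ω| ≤ b := hω.2
      have h2 : b < |Z ω| := hω2
      linarith
    have hsplitI : (∫ ω in {ω | |Z ω| ≤ b}, (Z ω) ^ 2 ∂P)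
        = (∫ ω in {ω | |Z ω| ≤ a}, (Z ω) ^ 2 ∂P) + ∫ ω in E, (Z ω) ^ 2 ∂P := by
      rw [hA']
      exact setIntegral_union hdisj hmeasE
        (hIntOn a _ (hmeasLe a) (fun ω h => h)) (hIntOn b _ hmeasE (fun ω h => h.2))
    have hEb : (∫ ω in E, (Z ω) ^ 2 ∂P) ≤ b ^ 2 * (P E).toReal :=
      hIb b E hmeasE (fun ω h => h.2)
    have hmeasEq : (P {ω | a < |Z ω|}).toReal
        = (P E).toReal + (P {ω | b < |Z ω|}).toReal := by
      rw [hB, measure_union hdisj2 (hmeasLt b),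
        ENNReal.toReal_add (measure_ne_top P _) (measure_ne_top P _)]
    rw [Finset.sum_Icc_succ_top (by omega : 1 ≤ m + 1)]
    have hmul : b ^ 2 * (P {ω | a < |Z ω|}).toReal
        = b ^ 2 * (P E).toReal + b ^ 2 * (P {ω | b < |Z ω|}).toReal := by
      rw [hmeasEq]; ring
    have hq0 : 0 ≤ (P {ω | a < |Z ω|}).toReal := ENNReal.toReal_nonneg
    rw [hsplitI]
    have ihr := ih
    nlinarith [hEb, hmul, ihr]

end AuxStmt11

theorem stmt11 (P : Measure Ω) [IsProbabilityMeasure P] (Z : Ω → ℝ) (hZ : Measurable Z)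
    (c : ℕ → ℝ) (hc : ∀ n, 0 < c n) (cc : ℝ) (hcc : 1 < cc)
    (hyp : ∀ n : ℕ, 1 < n →
      cc ≤ ((n : ℝ) - 1) / (c (n - 1)) ^ 2 * ((c n) ^ 2 - (c (n - 1)) ^ 2))
    (htail : Tendsto (fun n : ℕ => (n : ℝ) * (P {ω | c n < |Z ω|}).toReal) atTop (nhds 0)) :
    Tendsto (fun n : ℕ =>
      (n : ℝ) / (c n) ^ 2 * ∫ ω in {ω | |Z ω| ≤ c n}, (Z ω) ^ 2 ∂P) atTop (nhds 0) := by
  have hstep : ∀ k : ℕ, 1 ≤ k → cc * (c k) ^ 2 / k ≤ (c (k + 1)) ^ 2 - (c k) ^ 2 := by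
    intro k hk
    have h := hyp (k + 1) (by omega)
    have hk0 : (0:ℝ) < k := by exact_mod_cast hk
    have hx : (0:ℝ) < (c k) ^ 2 := pow_pos (hc k) 2
    simp only [Nat.add_sub_cancel] at h
    push_cast at h
    have h2 : ((k:ℝ) + 1 - 1) = (k:ℝ) := by ring
    rw [h2, div_mul_eq_mul_div, le_div_iff₀ hx] at h
    rw [div_le_iff₀ hk0]
    nlinarith [h]
  have hq : ∀ k : ℕ, 1 ≤ k → (c k) ^ 2 < (c (k + 1)) ^ 2 := by
    intro k hk
    have hk0 : (0:ℝ) < k := by exact_mod_cast hk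
    have hx : (0:ℝ) < (c k) ^ 2 := pow_pos (hc k) 2
    have h := hstep k hk
    have : 0 < cc * (c k) ^ 2 / (k:ℝ) := div_pos (mul_pos (by linarith) (pow_pos (hc k) 2)) hk0
    linarith
  have hmono : ∀ k : ℕ, 1 ≤ k → c k ≤ c (k + 1) := by
    intro k hk
    exact le_of_lt (lt_of_pow_lt_pow_left₀ 2 (hc _).le (hq k hk))
  have hd0 : ∀ k : ℕ, 1 ≤ k → (0:ℝ) ≤ (c (k + 1)) ^ 2 - (c k) ^ 2 := by
    intro k hk
    linarith [hq k hk]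
  have htz := aux_growth11 c hc cc hcc hstep
  have habel := aux_abel11 P Z hZ c hmono
  have hsum := aux_sumbound11 c hc cc hcc hstep
  set C := 2 * cc / (cc - 1) with hCdef
  have hC0 : 0 < C := div_pos (by linarith) (by linarith)
  set q : ℕ → ℝ := fun n => (P {ω | c n < |Z ω|}).toReal with hqdef
  have hq0 : ∀ n, 0 ≤ q n := fun n => ENNReal.toReal_nonneg
  have hq1 : ∀ n, q n ≤ 1 := by
    intro n
    have h := ENNReal.toReal_mono (by norm_num : (1:ENNReal) ≠ ⊤)
      (prob_le_one (μ := P) (s := {ω | c n < |Z ω|}))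
    simpa using h
  rw [Metric.tendsto_atTop]
  intro ε hε
  set δ := ε / (2 * (C + 1)) with hδdef
  have hδ0 : 0 < δ := div_pos hε (by linarith)
  obtain ⟨M0, hM0⟩ := (Metric.tendsto_atTop.1 htail) δ hδ0
  set M := max M0 1 with hMdef
  have hM1 : 1 ≤ M := le_max_right _ _
  have hqs : ∀ j : ℕ, M ≤ j → q j ≤ δ / j := by
    intro j hj
    have hj1 : 1 ≤ j := le_trans hM1 hj
    have hj0 : (0:ℝ) < j := by exact_mod_cast hj1
    have h := hM0 j (le_trans (le_max_left _ _) hj)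
    rw [Real.dist_eq, sub_zero, abs_of_nonneg (mul_nonneg (Nat.cast_nonneg j) (hq0 j))] at h
    rw [le_div_iff₀ hj0]
    nlinarith [h]
  set K := (c 1) ^ 2 + (c (M + 1)) ^ 2 with hKdef
  have hK0 : 0 < K := by
    have h1 := pow_pos (hc 1) 2
    have h2 := pow_pos (hc (M + 1)) 2
    rw [hKdef]
    linarith
  obtain ⟨N2, hN2⟩ := (Metric.tendsto_atTop.1 htz) (ε / (2 * K))
    (div_pos hε (by linarith))
  refine ⟨max (max N2 (M + 2)) 2, fun n hn => ?_⟩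
  have hnN2 : N2 ≤ n := le_trans (le_trans (le_max_left _ _) (le_max_left _ _)) hn
  have hnM : M + 2 ≤ n := le_trans (le_trans (le_max_right _ _) (le_max_left _ _)) hn
  obtain ⟨m, rfl⟩ : ∃ m, n = m + 1 := ⟨n - 1, by omega⟩
  have hm1 : M + 1 ≤ m := by omega
  have hmM : 1 ≤ m := by omega
  have hx : (0:ℝ) < (c (m + 1)) ^ 2 := pow_pos (hc _) 2
  have hm0 : (0:ℝ) < (m:ℝ) + 1 := by positivity
  have hI0 : 0 ≤ ∫ ω in {ω | |Z ω| ≤ c (m + 1)}, (Z ω) ^ 2 ∂P :=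
    setIntegral_nonneg (measurableSet_le hZ.abs measurable_const) (fun ω _ => sq_nonneg _)
  have hI : (∫ ω in {ω | |Z ω| ≤ c (m + 1)}, (Z ω) ^ 2 ∂P)
      ≤ (c 1) ^ 2 + ∑ j ∈ Finset.Icc 1 m, ((c (j + 1)) ^ 2 - (c j) ^ 2) * q j := by
    have h := habel m
    have hq' : 0 ≤ (c (m + 1)) ^ 2 * q (m + 1) := mul_nonneg hx.le (hq0 _)
    linarith
  have hIoc : Finset.Icc 1 m = Finset.Ioc 0 m := by
    ext j; simp only [Finset.mem_Icc, Finset.mem_Ioc]; omega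
  have htel : ∑ j ∈ Finset.Ioc 0 M, ((c (j + 1)) ^ 2 - (c j) ^ 2)
      = (c (M + 1)) ^ 2 - (c 1) ^ 2 := by
    have h1 : Finset.Ioc 0 M = Finset.Ico 1 (M + 1) := by
      ext j; simp only [Finset.mem_Ioc, Finset.mem_Ico]; omega
    rw [h1, Finset.sum_Ico_eq_sum_range]
    simp only [Nat.add_sub_cancel]
    have h2 := Finset.sum_range_sub (fun i => (c (i + 1)) ^ 2) M
    rw [← h2]
    apply Finset.sum_congr rfl
    intro i _
    rw [Nat.add_comm 1 i]
  have hsplit : ∑ j ∈ Finset.Icc 1 m, ((c (j + 1)) ^ 2 - (c j) ^ 2) * q j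
      ≤ (c (M + 1)) ^ 2 + δ * (C * (c (m + 1)) ^ 2 / ((m:ℝ) + 1)) := by
    rw [hIoc, ← Finset.sum_Ioc_consecutive _ (Nat.zero_le M) (by omega : M ≤ m)]
    have h1 : ∑ j ∈ Finset.Ioc 0 M, ((c (j + 1)) ^ 2 - (c j) ^ 2) * q j
        ≤ (c (M + 1)) ^ 2 := by
      calc ∑ j ∈ Finset.Ioc 0 M, ((c (j + 1)) ^ 2 - (c j) ^ 2) * q j
          ≤ ∑ j ∈ Finset.Ioc 0 M, ((c (j + 1)) ^ 2 - (c j) ^ 2) := by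
            apply Finset.sum_le_sum
            intro j hj
            have hj1 : 1 ≤ j := (Finset.mem_Ioc.1 hj).1
            exact mul_le_of_le_one_right (hd0 j hj1) (hq1 j)
        _ = (c (M + 1)) ^ 2 - (c 1) ^ 2 := htel
        _ ≤ (c (M + 1)) ^ 2 := by nlinarith [pow_pos (hc 1) 2]
    have h2 : ∑ j ∈ Finset.Ioc M m, ((c (j + 1)) ^ 2 - (c j) ^ 2) * q j
        ≤ δ * (C * (c (m + 1)) ^ 2 / ((m:ℝ) + 1)) := by
      calc ∑ j ∈ Finset.Ioc M m, ((c (j + 1)) ^ 2 - (c j) ^ 2) * q j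
          ≤ ∑ j ∈ Finset.Ioc M m, δ * (((c (j + 1)) ^ 2 - (c j) ^ 2) / j) := by
            apply Finset.sum_le_sum
            intro j hj
            have hjM : M ≤ j := le_of_lt (Finset.mem_Ioc.1 hj).1
            have hj1 : 1 ≤ j := le_trans hM1 hjM
            have hj0 : (0:ℝ) < j := by exact_mod_cast hj1
            calc ((c (j + 1)) ^ 2 - (c j) ^ 2) * q j
                ≤ ((c (j + 1)) ^ 2 - (c j) ^ 2) * (δ / j) :=
                  mul_le_mul_of_nonneg_left (hqs j hjM) (hd0 j hj1)
              _ = δ * (((c (j + 1)) ^ 2 - (c j) ^ 2) / j) := by ring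
        _ = δ * ∑ j ∈ Finset.Ioc M m, (((c (j + 1)) ^ 2 - (c j) ^ 2) / j) := by
            rw [Finset.mul_sum]
        _ ≤ δ * ∑ j ∈ Finset.Icc 1 m, (((c (j + 1)) ^ 2 - (c j) ^ 2) / j) := by
            apply mul_le_mul_of_nonneg_left _ hδ0.le
            apply Finset.sum_le_sum_of_subset_of_nonneg
            · intro j hj
              have := Finset.mem_Ioc.1 hj
              rw [Finset.mem_Icc]
              omega
            · intro j hj _
              have hj1 : 1 ≤ j := (Finset.mem_Icc.1 hj).1
              exact div_nonneg (hd0 j hj1) (Nat.cast_nonneg j)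
        _ ≤ δ * (C * (c (m + 1)) ^ 2 / ((m:ℝ) + 1)) :=
            mul_le_mul_of_nonneg_left (hsum m hmM) hδ0.le
    linarith
  have hfpos : 0 ≤ ((m:ℝ) + 1) / (c (m + 1)) ^ 2 * ∫ ω in {ω | |Z ω| ≤ c (m + 1)}, (Z ω) ^ 2 ∂P :=
    mul_nonneg (by positivity) hI0
  have hb1 : ((m:ℝ) + 1) / (c (m + 1)) ^ 2 * (∫ ω in {ω | |Z ω| ≤ c (m + 1)}, (Z ω) ^ 2 ∂P)
      ≤ ((m:ℝ) + 1) / (c (m + 1)) ^ 2 * (K + δ * (C * (c (m + 1)) ^ 2 / ((m:ℝ) + 1))) := by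
    apply mul_le_mul_of_nonneg_left _ (by positivity)
    rw [hKdef]
    linarith [hI, hsplit]
  have heq : ((m:ℝ) + 1) / (c (m + 1)) ^ 2 * (K + δ * (C * (c (m + 1)) ^ 2 / ((m:ℝ) + 1)))
      = ((m:ℝ) + 1) / (c (m + 1)) ^ 2 * K + δ * C := by
    have hxne := (hc (m + 1)).ne'
    field_simp
  have hb2 : ((m:ℝ) + 1) / (c (m + 1)) ^ 2 * K < ε / 2 := by
    have h := hN2 (m + 1) (by omega)
    rw [Real.dist_eq, sub_zero] at h
    have habs : ((m + 1 : ℕ) : ℝ) / (c (m + 1)) ^ 2 < ε / (2 * K) := lt_of_abs_lt h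
    push_cast at habs
    calc ((m:ℝ) + 1) / (c (m + 1)) ^ 2 * K < (ε / (2 * K)) * K :=
          mul_lt_mul_of_pos_right habs hK0
      _ = ε / 2 := by
          field_simp
  have hb3 : δ * C ≤ ε / 2 := by
    have h : δ * C = ε * C / (2 * (C + 1)) := by rw [hδdef]; ring
    rw [h, div_le_div_iff₀ (by linarith) (by norm_num)]
    nlinarith [mul_nonneg hε.le hC0.le]
  rw [Real.dist_eq, sub_zero]
  push_cast
  rw [abs_of_nonneg hfpos]
  calc ((m:ℝ) + 1) / (c (m + 1)) ^ 2 * (∫ ω in {ω | |Z ω| ≤ c (m + 1)}, (Z ω) ^ 2 ∂P)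
      ≤ ((m:ℝ) + 1) / (c (m + 1)) ^ 2 * K + δ * C := by rw [← heq]; exact hb1
    _ < ε / 2 + ε / 2 := by
        apply add_lt_add_of_lt_of_le hb2 hb3
    _ = ε := by ring
end
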